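/- arXiv:1910.12364 — 4 statements merged into one kernel-verified Lean document; each statement's English description precedes it below -/
import Mathlib

section
/- For n ≥ 2, the neighbor connectivity of the n-dimensional hypercube Q_n equals ⌈n/2⌉. -/
open SimpleGraph

/-- Vertex connectivity: the least number of vertices whose removal leaves
a disconnected or trivial (single-vertex) graph. -/
noncomputable def vConn {V : Type*} (G : SimpleGraph V) : ℕ :=
  sInf {m | ∃ S : Set V, S.Finite ∧ S.ncard = m ∧
    (¬ (G.induce Sᶜ).Connected ∨ ∃ v, Sᶜ = {v})}

/-- Closed neighborhood of a set of vertices. -/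
def closedNbhd {V : Type*} (G : SimpleGraph V) (U : Set V) : Set V :=
  U ∪ {v | ∃ u ∈ U, G.Adj u v}

/-- The survival graph `G ⊖ U`: the subgraph induced on vertices
outside the closed neighborhood of `U`. -/
def survival {V : Type*} (G : SimpleGraph V) (U : Set V) :
    SimpleGraph (↥(closedNbhd G U)ᶜ) := G.induce (closedNbhd G U)ᶜ

/-- The survival graph of `U` is disconnected, complete, or empty. -/
def SurvivalBad {V : Type*} (G : SimpleGraph V) (U : Set V) : Prop :=
  ((closedNbhd G U)ᶜ ≠ ∅ ∧ ¬ (survival G U).Connected) ∨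
  (∀ a ∈ (closedNbhd G U)ᶜ, ∀ b ∈ (closedNbhd G U)ᶜ, a ≠ b → G.Adj a b) ∨
  (closedNbhd G U)ᶜ = ∅

/-- Neighbor connectivity. -/
noncomputable def nbConn {V : Type*} (G : SimpleGraph V) : ℕ :=
  sInf {m | ∃ U : Set V, U.Finite ∧ U.ncard = m ∧ SurvivalBad G U}

/-- The `k`-ary `n`-cube. -/
def QCube (n k : ℕ) : SimpleGraph (Fin n → ZMod k) where
  Adj u v := u ≠ v ∧ ∃ j, (u j = v j + 1 ∨ u j = v j - 1) ∧ ∀ i ≠ j, u i = v i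
  symm := by
    constructor
    rintro u v ⟨hne, j, hj, hrest⟩
    refine ⟨hne.symm, j, ?_, fun i hi => (hrest i hi).symm⟩
    rcases hj with h | h
    · right; rw [h]; ring
    · left; rw [h]; ring
  loopless := by constructor; rintro u ⟨hne, _⟩; exact hne rfl


open Finset

abbrev V' (n : ℕ) : Type := Fin n → ZMod 2

namespace NBC

lemma z2 (a b : ZMod 2) : a ≠ b ↔ a = b + 1 := by revert a b; decide

lemma z2' (a : ZMod 2) : a ≠ a + 1 := by revert a; decide

lemma z2'' (a : ZMod 2) : a + 1 + 1 = a := by revert a; decide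

def flip {n : ℕ} (j : Fin n) (x : V' n) : V' n := Function.update x j (x j + 1)

@[simp] lemma flip_self {n} (j : Fin n) (x : V' n) : flip j x j = x j + 1 :=
  Function.update_self j _ x

lemma flip_ne {n} {i j : Fin n} (h : i ≠ j) (x : V' n) : flip j x i = x i :=
  Function.update_of_ne h _ x

lemma flip_flip {n} (j : Fin n) (x : V' n) : flip j (flip j x) = x := by
  funext i
  by_cases h : i = j
  · subst h; simp [z2'']
  · rw [flip_ne h, flip_ne h]

lemma flip_ne_self {n} (j : Fin n) (x : V' n) : flip j x ≠ x := by
  intro h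
  have := congrFun h j
  rw [flip_self] at this
  exact z2' (x j) this.symm

lemma adj_iff {n} {u v : V' n} : (QCube n 2).Adj u v ↔ ∃ j, v = flip j u := by
  constructor
  · rintro ⟨hne, j, hj, hrest⟩
    refine ⟨j, funext fun i => ?_⟩
    by_cases hij : i = j
    · subst hij
      have h1 : u i ≠ v i := by
        revert hj; generalize u i = a; generalize v i = b; revert a b; decide
      simp [(z2 _ _).mp (Ne.symm h1)]
    · rw [flip_ne hij, (hrest i hij)]
  · rintro ⟨j, rfl⟩
    refine ⟨(flip_ne_self j u).symm, j, ?_, fun i hi => (flip_ne hi u).symm⟩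
    left; simp [z2'']

def diffs {n} (u v : V' n) : Finset (Fin n) := Finset.univ.filter (fun i => u i ≠ v i)

@[simp] lemma mem_diffs {n} {u v : V' n} {i : Fin n} : i ∈ diffs u v ↔ u i ≠ v i := by
  simp [diffs]

lemma diffs_comm {n} (u v : V' n) : diffs u v = diffs v u := by
  ext i; simp [ne_comm]

lemma diffs_eq_empty {n} {u v : V' n} : diffs u v = ∅ ↔ u = v := by
  constructor
  · intro h; funext i
    by_contra hne
    exact (Finset.eq_empty_iff_forall_notMem.mp h i) (mem_diffs.mpr hne)
  · rintro rfl; ext i; simp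

lemma diffs_flip_right_mem {n} {u v : V' n} {j : Fin n} (hj : j ∈ diffs u v) :
    diffs u (flip j v) = (diffs u v).erase j := by
  ext i
  by_cases h : i = j
  · subst h
    simp only [mem_diffs, Finset.mem_erase, ne_eq, not_true_eq_false, false_and, iff_false,
      flip_self, not_not]
    have := mem_diffs.mp hj
    revert this; generalize u i = a; generalize v i = b; revert a b; decide
  · simp [flip_ne h, h, Finset.mem_erase]

lemma diffs_flip_right_not_mem {n} {u v : V' n} {j : Fin n} (hj : j ∉ diffs u v) :
    diffs u (flip j v) = insert j (diffs u v) := by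
  ext i
  by_cases h : i = j
  · subst h
    simp only [mem_diffs, flip_self, Finset.mem_insert, true_or, iff_true]
    have : u i = v i := by simpa using hj
    rw [this]; exact (z2 _ _).mpr (z2'' _).symm
  · simp [flip_ne h, h, Finset.mem_insert]

lemma diffs_flip_self {n} (u : V' n) (j : Fin n) : diffs u (flip j u) = {j} := by
  have h : j ∉ diffs u u := by simp
  rw [diffs_flip_right_not_mem h]
  have : diffs u u = ∅ := diffs_eq_empty.mpr rfl
  rw [this]; rfl

lemma adj_iff_card {n} {u v : V' n} : (QCube n 2).Adj u v ↔ (diffs u v).card = 1 := by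
  rw [adj_iff]
  constructor
  · rintro ⟨j, rfl⟩; rw [diffs_flip_self]; simp
  · intro h
    obtain ⟨j, hj⟩ := Finset.card_eq_one.mp h
    refine ⟨j, funext fun i => ?_⟩
    by_cases hij : i = j
    · subst hij
      have : u i ≠ v i := by
        have : i ∈ diffs u v := hj ▸ Finset.mem_singleton_self i
        simpa using this
      rw [flip_self, ← (z2 _ _).mp (Ne.symm this)]
    · have : i ∉ diffs u v := by rw [hj]; simp [hij]
      rw [flip_ne hij]
      simpa using not_not.mp (fun hne => this (mem_diffs.mpr (Ne.symm hne)))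

/-- closed neighborhood as a Finset -/
def nbhdF {n} (u : V' n) : Finset (V' n) :=
  insert u (Finset.univ.image (fun j => flip j u))

lemma mem_nbhdF {n} {u v : V' n} : v ∈ nbhdF u ↔ v = u ∨ ∃ j, v = flip j u := by
  simp [nbhdF, eq_comm]

lemma mem_nbhdF_adj {n} {u v : V' n} : v ∈ nbhdF u ↔ v = u ∨ (QCube n 2).Adj u v := by
  rw [mem_nbhdF, adj_iff]

lemma self_mem_nbhdF {n} (u : V' n) : u ∈ nbhdF u := mem_nbhdF.mpr (Or.inl rfl)

lemma card_nbhdF {n} (u : V' n) : (nbhdF u).card ≤ n + 1 := by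
  refine le_trans (Finset.card_insert_le _ _) ?_
  have := Finset.card_image_le (s := (Finset.univ : Finset (Fin n))) (f := fun j => flip j u)
  simp at this
  omega

def deadF {n} (A B : Finset (V' n)) : Finset (V' n) := A.biUnion nbhdF ∪ B

lemma mem_deadF {n} {A B : Finset (V' n)} {v : V' n} :
    v ∈ deadF A B ↔ (∃ u ∈ A, v ∈ nbhdF u) ∨ v ∈ B := by
  simp [deadF]

lemma subset_deadF {n} {A B : Finset (V' n)} {u : V' n} (hu : u ∈ A) : u ∈ deadF A B :=
  mem_deadF.mpr (Or.inl ⟨u, hu, self_mem_nbhdF u⟩)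

open Fin (snoc castSucc last init)

lemma flip_castSucc_snoc {n} (j : Fin n) (a : V' n) (s : ZMod 2) :
    flip (castSucc j) (snoc a s) = snoc (flip j a) s := by
  funext i
  induction i using Fin.lastCases with
  | last =>
    rw [flip_ne (Fin.castSucc_lt_last j).ne']
    simp
  | cast i =>
    by_cases h : i = j
    · subst h
      rw [flip_self]
      simp
    · rw [flip_ne (by simpa [Fin.castSucc_inj] using h)]
      simp [flip_ne h]

lemma flip_last_snoc {n} (a : V' n) (s : ZMod 2) :
    flip (last n) (snoc a s) = snoc a (s + 1) := by
  funext i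
  induction i using Fin.lastCases with
  | last => rw [flip_self]; simp
  | cast i =>
    rw [flip_ne (Fin.castSucc_lt_last i).ne]
    simp

lemma snoc_eq_iff {n} {a b : V' n} {s t : ZMod 2} :
    (snoc a s : V' (n+1)) = snoc b t ↔ a = b ∧ s = t := by
  constructor
  · intro h
    constructor
    · funext i
      have := congrFun h (castSucc i)
      simpa using this
    · have := congrFun h (last n)
      simpa using this
  · rintro ⟨rfl, rfl⟩; rfl

lemma z2ne (t u : ZMod 2) (h : t ≠ u) : u = t + 1 := by revert h; revert t u; decide

lemma snoc_mem_nbhdF {n} {a c : V' n} {s r : ZMod 2} :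
    (snoc a s : V' (n+1)) ∈ nbhdF (snoc c r) ↔
      (r = s ∧ a ∈ nbhdF c) ∨ (r ≠ s ∧ a = c) := by
  rw [mem_nbhdF]
  constructor
  · rintro (h | ⟨j, h⟩)
    · obtain ⟨h1, h2⟩ := snoc_eq_iff.mp h
      exact Or.inl ⟨h2.symm, mem_nbhdF.mpr (Or.inl h1)⟩
    · induction j using Fin.lastCases with
      | last =>
        rw [flip_last_snoc] at h
        obtain ⟨h1, h2⟩ := snoc_eq_iff.mp h
        exact Or.inr ⟨fun hrs => z2' r ((hrs.trans h2)), h1⟩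
      | cast j =>
        rw [flip_castSucc_snoc] at h
        obtain ⟨h1, h2⟩ := snoc_eq_iff.mp h
        exact Or.inl ⟨h2.symm, mem_nbhdF.mpr (Or.inr ⟨j, h1⟩)⟩
  · rintro (⟨rfl, hnb⟩ | ⟨hrs, rfl⟩)
    · rcases mem_nbhdF.mp hnb with h | ⟨j, h⟩
      · exact Or.inl (snoc_eq_iff.mpr ⟨h, rfl⟩)
      · exact Or.inr ⟨castSucc j, by rw [flip_castSucc_snoc]; exact snoc_eq_iff.mpr ⟨h, rfl⟩⟩
    · exact Or.inr ⟨last n, by rw [flip_last_snoc]; exact snoc_eq_iff.mpr ⟨rfl, z2ne r s hrs⟩⟩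

def sideA {n} (A : Finset (V' (n+1))) (s : ZMod 2) : Finset (V' n) :=
  (A.filter (fun u => u (last n) = s)).image init

def shadowA {n} (A : Finset (V' (n+1))) (s : ZMod 2) : Finset (V' n) :=
  (A.filter (fun u => ¬ (u (last n) = s))).image init

lemma mem_sideA {n} {A : Finset (V' (n+1))} {s : ZMod 2} {a : V' n} :
    a ∈ sideA A s ↔ (snoc a s : V' (n+1)) ∈ A := by
  unfold sideA
  rw [Finset.mem_image]
  constructor
  · rintro ⟨u, hu, rfl⟩
    obtain ⟨huA, hul⟩ := Finset.mem_filter.mp hu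
    rwa [show (snoc (init u) s : V' (n+1)) = u by
      conv_rhs => rw [← Fin.snoc_init_self u]
      exact snoc_eq_iff.mpr ⟨rfl, hul.symm⟩]
  · intro h
    exact ⟨snoc a s, Finset.mem_filter.mpr ⟨h, by simp⟩, by simp⟩

lemma mem_shadowA {n} {A : Finset (V' (n+1))} {s : ZMod 2} {a : V' n} :
    a ∈ shadowA A s ↔ (snoc a (s+1) : V' (n+1)) ∈ A := by
  unfold shadowA
  rw [Finset.mem_image]
  constructor
  · rintro ⟨u, hu, rfl⟩
    obtain ⟨huA, hul⟩ := Finset.mem_filter.mp hu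
    rwa [show (snoc (init u) (s+1) : V' (n+1)) = u by
      conv_rhs => rw [← Fin.snoc_init_self u]
      exact snoc_eq_iff.mpr ⟨rfl, (z2ne s _ (fun h => hul h.symm)).symm⟩]
  · intro h
    refine ⟨snoc a (s+1), Finset.mem_filter.mpr ⟨h, by simp [z2']⟩, by simp⟩

lemma snoc_dead_iff {n} {A B : Finset (V' (n+1))} {a : V' n} {s : ZMod 2} :
    (snoc a s : V' (n+1)) ∈ deadF A B ↔
      a ∈ deadF (sideA A s) (sideA B s ∪ shadowA A s) := by
  rw [mem_deadF, mem_deadF]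
  constructor
  · rintro (⟨u, hu, hmem⟩ | hB)
    · rw [show u = snoc (init u) (u (last n)) from (Fin.snoc_init_self u).symm,
        snoc_mem_nbhdF] at hmem
      rcases hmem with ⟨hlast, hnb⟩ | ⟨hlast, heq⟩
      · refine Or.inl ⟨init u, mem_sideA.mpr ?_, hnb⟩
        rwa [show (snoc (init u) s : V' (n+1)) = u by
          conv_rhs => rw [← Fin.snoc_init_self u]
          exact snoc_eq_iff.mpr ⟨rfl, hlast.symm⟩]
      · refine Or.inr (Finset.mem_union.mpr (Or.inr (mem_shadowA.mpr ?_)))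
        rwa [show (snoc a (s+1) : V' (n+1)) = u by
          conv_rhs => rw [← Fin.snoc_init_self u]
          exact snoc_eq_iff.mpr ⟨heq, (z2ne s _ (fun hh => hlast hh.symm)).symm⟩]
    · exact Or.inr (Finset.mem_union.mpr (Or.inl (mem_sideA.mpr hB)))
  · rintro (⟨c, hc, hnb⟩ | hBS)
    · refine Or.inl ⟨snoc c s, mem_sideA.mp hc, ?_⟩
      rw [snoc_mem_nbhdF]
      exact Or.inl ⟨rfl, hnb⟩
    · rcases Finset.mem_union.mp hBS with hBs | hSh
      · exact Or.inr (mem_sideA.mp hBs)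
      · refine Or.inl ⟨snoc a (s+1), mem_shadowA.mp hSh, ?_⟩
        rw [snoc_mem_nbhdF]
        exact Or.inr ⟨(z2' s).symm, rfl⟩

lemma mem_nbhdF_diffs {n} {u v : V' n} : v ∈ nbhdF u ↔ (diffs u v).card ≤ 1 := by
  rw [mem_nbhdF_adj]
  constructor
  · rintro (rfl | hadj)
    · rw [diffs_eq_empty.mpr rfl]; simp
    · rw [adj_iff_card.mp hadj]
  · intro h
    interval_cases hc : (diffs u v).card
    · exact Or.inl (diffs_eq_empty.mp (Finset.card_eq_zero.mp hc)).symm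
    · exact Or.inr (adj_iff_card.mpr hc)

def killsP {n} (u x : V' (n+1)) (j : Fin n) : Prop :=
  flip (castSucc j) x ∈ nbhdF u ∨ flip (castSucc j) (flip (last n) x) ∈ nbhdF u

instance killsP_dec {n} (u x : V' (n+1)) : DecidablePred (killsP u x) := fun j => by
  unfold killsP; infer_instance

lemma kills_aux {n} {u x : V' (n+1)} {j : Fin n} (hd2 : 2 ≤ (diffs u x).card)
    (hk : killsP u x j) :
    castSucc j ∈ diffs u x ∧
      ((diffs u x).card = 2 ∨ ((diffs u x).card = 3 ∧ last n ∈ diffs u x)) := by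
  rcases hk with hk | hk
  · rw [mem_nbhdF_diffs] at hk
    by_cases hm : castSucc j ∈ diffs u x
    · rw [diffs_flip_right_mem hm, Finset.card_erase_of_mem hm] at hk
      exact ⟨hm, Or.inl (by omega)⟩
    · rw [diffs_flip_right_not_mem hm, Finset.card_insert_of_notMem hm] at hk
      omega
  · rw [mem_nbhdF_diffs] at hk
    have hne : castSucc j ≠ last n := (Fin.castSucc_lt_last j).ne
    by_cases hL : last n ∈ diffs u x
    · have hDy : diffs u (flip (last n) x) = (diffs u x).erase (last n) :=
        diffs_flip_right_mem hL
      by_cases hm : castSucc j ∈ diffs u x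
      · have hm0 : castSucc j ∈ (diffs u x).erase (last n) := Finset.mem_erase.mpr ⟨hne, hm⟩
        have hm' : castSucc j ∈ diffs u (flip (last n) x) := by rw [hDy]; exact hm0
        rw [diffs_flip_right_mem hm', hDy, Finset.card_erase_of_mem hm0,
          Finset.card_erase_of_mem hL] at hk
        refine ⟨hm, ?_⟩
        rcases Nat.lt_or_ge (diffs u x).card 3 with h3 | h3
        · exact Or.inl (by omega)
        · exact Or.inr ⟨by omega, hL⟩
      · have hm0 : castSucc j ∉ (diffs u x).erase (last n) := fun h =>
          hm (Finset.mem_of_mem_erase h)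
        have hm' : castSucc j ∉ diffs u (flip (last n) x) := by rw [hDy]; exact hm0
        rw [diffs_flip_right_not_mem hm', hDy, Finset.card_insert_of_notMem hm0,
          Finset.card_erase_of_mem hL] at hk
        omega
    · have hDy : diffs u (flip (last n) x) = insert (last n) (diffs u x) :=
        diffs_flip_right_not_mem hL
      by_cases hm : castSucc j ∈ diffs u x
      · have hm0 : castSucc j ∈ insert (last n) (diffs u x) := Finset.mem_insert_of_mem hm
        have hm' : castSucc j ∈ diffs u (flip (last n) x) := by rw [hDy]; exact hm0
        rw [diffs_flip_right_mem hm', hDy, Finset.card_erase_of_mem hm0,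
          Finset.card_insert_of_notMem hL] at hk
        omega
      · have hm0 : castSucc j ∉ insert (last n) (diffs u x) := by
          simp [Finset.mem_insert, hne, hm]
        have hm' : castSucc j ∉ diffs u (flip (last n) x) := by rw [hDy]; exact hm0
        rw [diffs_flip_right_not_mem hm', hDy, Finset.card_insert_of_notMem hm0,
          Finset.card_insert_of_notMem hL] at hk
        omega

lemma kills_y_aux {n} {u x : V' (n+1)} (hd2 : 2 ≤ (diffs u x).card)
    (hy : flip (last n) x ∈ nbhdF u) :
    last n ∈ diffs u x ∧ (diffs u x).card = 2 := by
  rw [mem_nbhdF_diffs] at hy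
  by_cases hL : last n ∈ diffs u x
  · rw [diffs_flip_right_mem hL, Finset.card_erase_of_mem hL] at hy
    exact ⟨hL, by omega⟩
  · rw [diffs_flip_right_not_mem hL, Finset.card_insert_of_notMem hL] at hy
    omega

lemma fiber_card {n} {u x : V' (n+1)} (hx : x ∉ nbhdF u) :
    ((Finset.univ : Finset (Fin n)).filter (fun j => killsP u x j)).card ≤ 2 ∧
    (flip (last n) x ∈ nbhdF u →
      ((Finset.univ : Finset (Fin n)).filter (fun j => killsP u x j)).card ≤ 1) := by
  have hd2 : 2 ≤ (diffs u x).card := by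
    rw [mem_nbhdF_diffs, not_le] at hx
    omega
  set F := (Finset.univ : Finset (Fin n)).filter (fun j => killsP u x j) with hF
  have hsub : ∀ j ∈ F, castSucc j ∈ (diffs u x).erase (last n) := by
    intro j hj
    have hk := (Finset.mem_filter.mp hj).2
    exact Finset.mem_erase.mpr ⟨(Fin.castSucc_lt_last j).ne, (kills_aux hd2 hk).1⟩
  have hcard : F.card ≤ ((diffs u x).erase (last n)).card :=
    Finset.card_le_card_of_injOn castSucc (fun j hj => hsub j hj)
      (fun a _ b _ h => Fin.castSucc_injective n h)
  constructor
  · rcases Finset.eq_empty_or_nonempty F with he | ⟨j0, hj0⟩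
    · rw [he]; simp
    · have hk := (Finset.mem_filter.mp hj0).2
      rcases (kills_aux hd2 hk).2 with h2 | ⟨h3, hL⟩
      · calc F.card ≤ _ := hcard
          _ ≤ (diffs u x).card := Finset.card_erase_le
          _ = 2 := h2
      · have := Finset.card_erase_of_mem hL
        omega
  · intro hy
    obtain ⟨hL, h2⟩ := kills_y_aux hd2 hy
    have := Finset.card_erase_of_mem hL
    omega

lemma flip_inj_idx {m} {i i' : Fin m} {x : V' m} (h : flip i x = flip i' x) : i = i' := by
  by_contra hne
  have h1 := congrFun h i
  rw [flip_self, flip_ne hne] at h1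
  exact z2' (x i) h1.symm

lemma exists_cross {n} (A B : Finset (V' (n+1))) (hcard : 2 * A.card + B.card ≤ n)
    (x : V' (n+1)) (hx : x ∉ deadF A B) :
    flip (last n) x ∉ deadF A B ∨
    ∃ j : Fin n, flip (castSucc j) x ∉ deadF A B ∧
      flip (castSucc j) (flip (last n) x) ∉ deadF A B := by
  classical
  by_contra hcon
  push_neg at hcon
  obtain ⟨hy, hblock⟩ := hcon
  set y := flip (last n) x with hydef
  have hylast : y (last n) = x (last n) + 1 := by rw [hydef, flip_self]
  have hxlast : ∀ j : Fin n, (flip (castSucc j) x) (last n) = x (last n) := fun j =>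
    flip_ne (Fin.castSucc_lt_last j).ne' x
  have hblk : ∀ j : Fin n, flip (castSucc j) x ∈ deadF A B ∨ flip (castSucc j) y ∈ deadF A B := by
    intro j
    by_cases h : flip (castSucc j) x ∈ deadF A B
    · exact Or.inl h
    · exact Or.inr (hblock j h)
  set t : Fin n → V' (n+1) := fun j =>
    if flip (castSucc j) x ∈ deadF A B then flip (castSucc j) x else flip (castSucc j) y
    with ht
  have htdead : ∀ j, t j ∈ deadF A B := by
    intro j
    by_cases h : flip (castSucc j) x ∈ deadF A B
    · simp only [ht, if_pos h]; exact h
    · simp only [ht, if_neg h]; exact hblock j h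
  have htor : ∀ j, t j = flip (castSucc j) x ∨ t j = flip (castSucc j) y := by
    intro j
    by_cases h : flip (castSucc j) x ∈ deadF A B
    · exact Or.inl (by simp only [ht, if_pos h])
    · exact Or.inr (by simp only [ht, if_neg h])
  have htney : ∀ j, t j ≠ y := by
    intro j he
    rcases htor j with h | h
    · rw [h] at he
      have := congrFun he (last n)
      rw [hxlast j, hylast] at this
      exact z2' (x (last n)) this
    · rw [h] at he
      have := congrFun he (castSucc j)
      rw [flip_self] at this
      exact z2' (y (castSucc j)) this.symm
  have hinj : ∀ j j', t j = t j' → j = j' := by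
    intro j j' he
    rcases htor j with h | h <;> rcases htor j' with h' | h'
    · rw [h, h'] at he
      exact Fin.castSucc_injective n (flip_inj_idx he)
    · rw [h, h'] at he
      have := congrFun he (last n)
      rw [hxlast j, flip_ne (Fin.castSucc_lt_last j').ne' y, hylast] at this
      exact absurd this (z2' (x (last n)))
    · rw [h, h'] at he
      have := congrFun he (last n)
      rw [hxlast j', flip_ne (Fin.castSucc_lt_last j).ne' y, hylast] at this
      exact absurd this.symm (z2' (x (last n)))
    · rw [h, h'] at he
      exact Fin.castSucc_injective n (flip_inj_idx he)
  set JA := Finset.univ.filter (fun j : Fin n => ∃ u ∈ A, t j ∈ nbhdF u) with hJA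
  set JB := Finset.univ.filter (fun j : Fin n => ¬ ∃ u ∈ A, t j ∈ nbhdF u) with hJB
  have hsplit : JA.card + JB.card = n := by
    rw [hJA, hJB, Finset.card_filter_add_card_filter_not]
    simp
  have hJBmem : ∀ j ∈ JB, t j ∈ B := by
    intro j hj
    have hd := htdead j
    rw [mem_deadF] at hd
    rcases hd with h | h
    · exact absurd h (Finset.mem_filter.mp hj).2
    · exact h
  have hJBinj : Set.InjOn t ↑JB := fun a _ b _ h => hinj a b h
  set κ : Fin n → V' (n+1) := fun j =>
    if h : ∃ u ∈ A, t j ∈ nbhdF u then h.choose else x with hκ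
  have hκspec : ∀ j ∈ JA, κ j ∈ A ∧ t j ∈ nbhdF (κ j) := by
    intro j hj
    have h := (Finset.mem_filter.mp hj).2
    simp only [hκ, dif_pos h]
    exact h.choose_spec
  have hxu : ∀ u ∈ A, x ∉ nbhdF u := fun u hu hmem =>
    hx (mem_deadF.mpr (Or.inl ⟨u, hu, hmem⟩))
  have hfibsub : ∀ u, (JA.filter fun j => κ j = u) ⊆
      Finset.univ.filter (fun j => killsP u x j) := by
    intro u j hj
    obtain ⟨hjJA, hju⟩ := Finset.mem_filter.mp hj
    obtain ⟨_, hnb⟩ := hκspec j hjJA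
    rw [hju] at hnb
    refine Finset.mem_filter.mpr ⟨Finset.mem_univ j, ?_⟩
    rcases htor j with h | h
    · exact Or.inl (h ▸ hnb)
    · exact Or.inr (h ▸ hnb)
  have hfib := Finset.card_eq_sum_card_fiberwise (f := κ) (s := JA) (t := A)
    (fun j hj => (hκspec j hj).1)
  have hgen : ∀ u ∈ A, (JA.filter fun j => κ j = u).card ≤ 2 := fun u hu =>
    le_trans (Finset.card_le_card (hfibsub u)) (fiber_card (hxu u hu)).1
  have hyd := hy
  rw [mem_deadF] at hyd
  rcases hyd with ⟨u0, hu0A, hu0nb⟩ | hyB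
  · have h1 : (JA.filter fun j => κ j = u0).card ≤ 1 :=
      le_trans (Finset.card_le_card (hfibsub u0)) ((fiber_card (hxu u0 hu0A)).2 hu0nb)
    have hsum : JA.card ≤ 1 + 2 * (A.card - 1) := by
      rw [hfib, ← Finset.add_sum_erase A _ hu0A]
      have h2 : ∑ u ∈ A.erase u0, (JA.filter fun j => κ j = u).card
          ≤ (A.erase u0).card * 2 := by
        refine Finset.sum_le_card_nsmul _ _ 2 (fun u hu => hgen u (Finset.mem_of_mem_erase hu))
      rw [Finset.card_erase_of_mem hu0A] at h2
      omega
    have hJB1 : JB.card ≤ B.card :=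
      Finset.card_le_card_of_injOn t (fun j hj => hJBmem j hj) hJBinj
    have hA1 : 1 ≤ A.card := Finset.card_pos.mpr ⟨u0, hu0A⟩
    omega
  · have hJA2 : JA.card ≤ 2 * A.card := by
      rw [hfib]
      have h2 : ∑ u ∈ A, (JA.filter fun j => κ j = u).card ≤ A.card * 2 :=
        Finset.sum_le_card_nsmul _ _ 2 (fun u hu => hgen u hu)
      omega
    have hJB2 : JB.card ≤ (B.erase y).card :=
      Finset.card_le_card_of_injOn t
        (fun j hj => Finset.mem_erase.mpr ⟨htney j, hJBmem j hj⟩) hJBinj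
    rw [Finset.card_erase_of_mem hyB] at hJB2
    have hB1 : 1 ≤ B.card := Finset.card_pos.mpr ⟨y, hyB⟩
    omega

def stepR {n} (A B : Finset (V' n)) (a b : V' n) : Prop :=
  a ∉ deadF A B ∧ b ∉ deadF A B ∧ (QCube n 2).Adj a b

def reachR {n} (A B : Finset (V' n)) : V' n → V' n → Prop :=
  Relation.ReflTransGen (stepR A B)

lemma stepR_symm {n} {A B : Finset (V' n)} : Symmetric (stepR A B) :=
  fun _ _ ⟨h1, h2, h3⟩ => ⟨h2, h1, h3.symm⟩

lemma reachR_symm {n} {A B : Finset (V' n)} {a b : V' n} (h : reachR A B a b) :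
    reachR A B b a := (@Relation.ReflTransGen.stdSymm _ _ ⟨fun a b => @stepR_symm _ A B a b⟩).symm _ _ h

lemma reachR_snoc {n} {A B : Finset (V' (n+1))} {s : ZMod 2} {a b : V' n}
    (h : reachR (sideA A s) (sideA B s ∪ shadowA A s) a b) :
    reachR A B (snoc a s) (snoc b s) := by
  induction h with
  | refl => exact Relation.ReflTransGen.refl
  | tail h1 h2 ih =>
    obtain ⟨hc, hd, hadj⟩ := h2
    refine ih.tail ⟨fun hh => hc (snoc_dead_iff.mp hh), fun hh => hd (snoc_dead_iff.mp hh), ?_⟩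
    obtain ⟨j, rfl⟩ := adj_iff.mp hadj
    exact adj_iff.mpr ⟨castSucc j, (flip_castSucc_snoc j _ s).symm⟩

def ClaimP (n : ℕ) : Prop :=
  ∀ (A B : Finset (V' n)), 2 * A.card + B.card < n →
    (∃ x, x ∉ deadF A B) ∧
    (∀ x y, x ∉ deadF A B → y ∉ deadF A B → reachR A B x y)

lemma side_cond_card {n} (A B : Finset (V' (n+1))) (s : ZMod 2) :
    2 * (sideA A s).card + (sideA B s ∪ shadowA A s).card
      ≤ 2 * (A.filter (fun u => u (last n) = s)).card
        + (B.filter (fun u => u (last n) = s)).card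
        + (A.filter (fun u => ¬ (u (last n) = s))).card := by
  have h1 : (sideA A s).card ≤ (A.filter (fun u => u (last n) = s)).card :=
    Finset.card_image_le
  have h2 : (sideA B s).card ≤ (B.filter (fun u => u (last n) = s)).card :=
    Finset.card_image_le
  have h3 : (shadowA A s).card ≤ (A.filter (fun u => ¬ (u (last n) = s))).card :=
    Finset.card_image_le
  have h4 := Finset.card_union_le (sideA B s) (shadowA A s)
  linarith

lemma caseEmpty {n} (hn : 1 ≤ n) (ih : ClaimP n) (A B : Finset (V' (n+1)))
    (hcard : 2 * A.card + B.card < n + 1) (s : ZMod 2)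
    (hAs : A.filter (fun u => u (last n) = s) = ∅)
    (hBs : B.filter (fun u => u (last n) = s) = ∅) :
    (∃ x, x ∉ deadF A B) ∧
    (∀ x y, x ∉ deadF A B → y ∉ deadF A B → reachR A B x y) := by
  have hAfc : (A.filter (fun u => ¬ (u (last n) = s))).card ≤ A.card :=
    Finset.card_filter_le _ _
  have hsAe : sideA A s = ∅ := by unfold sideA; rw [hAs]; exact Finset.image_empty _
  have hsBe : sideA B s = ∅ := by unfold sideA; rw [hBs]; exact Finset.image_empty _
  have hcond : 2 * (sideA A s).card + (sideA B s ∪ shadowA A s).card < n := by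
    have h0 := side_cond_card A B s
    rw [hAs, hBs] at h0
    simp only [Finset.card_empty, Nat.mul_zero, Nat.zero_add] at h0
    linarith
  obtain ⟨⟨x1, hx1⟩, hreach1⟩ := ih (sideA A s) (sideA B s ∪ shadowA A s) hcond
  have hX : (snoc x1 s : V' (n+1)) ∉ deadF A B := fun h => hx1 (snoc_dead_iff.mp h)
  have hall : ∀ z, z ∉ deadF A B → reachR A B z (snoc x1 s) := by
    intro z hz
    by_cases hzl : z (last n) = s
    · have hzz : z = snoc (init z) s := by rw [← hzl]; exact (Fin.snoc_init_self z).symm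
      rw [hzz] at hz ⊢
      exact reachR_snoc (hreach1 (init z) x1 (fun h => hz (snoc_dead_iff.mpr h)) hx1)
    · have hzz : z = snoc (init z) (s + 1) := by
        rw [← z2ne s (z (last n)) (fun h => hzl h.symm)]
        exact (Fin.snoc_init_self z).symm
      rw [hzz] at hz ⊢
      have hz' : (snoc (init z) s : V' (n+1)) ∉ deadF A B := by
        intro hdead
        have hmem := snoc_dead_iff.mp hdead
        rw [mem_deadF] at hmem
        rcases hmem with ⟨c, hc, _⟩ | hmem
        · rw [hsAe] at hc; exact absurd hc (Finset.notMem_empty c)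
        · rcases Finset.mem_union.mp hmem with h | h
          · rw [hsBe] at h; exact absurd h (Finset.notMem_empty _)
          · exact hz (subset_deadF (mem_shadowA.mp h))
      refine Relation.ReflTransGen.head ⟨hz, hz', ?_⟩ ?_
      · refine adj_iff.mpr ⟨last n, ?_⟩
        rw [flip_last_snoc]
        exact snoc_eq_iff.mpr ⟨rfl, (z2'' s).symm⟩
      · exact reachR_snoc (hreach1 (init z) x1 (fun h => hz' (snoc_dead_iff.mpr h)) hx1)
  exact ⟨⟨snoc x1 s, hX⟩,
    fun x y hx hy => (hall x hx).trans (reachR_symm (hall y hy))⟩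

lemma z2cases (t : ZMod 2) : t = 0 ∨ t = 1 := by revert t; decide

lemma filter_last_neg {n} (C : Finset (V' (n+1))) (s : ZMod 2) :
    C.filter (fun u => ¬ (u (last n) = s)) = C.filter (fun u => u (last n) = s + 1) := by
  refine Finset.filter_congr (fun u _ => ?_)
  constructor
  · exact fun h => z2ne s _ (fun hh => h hh.symm)
  · intro h hh
    rw [hh] at h
    exact z2' s h

lemma caseBoth {n} (ih : ClaimP n) (A B : Finset (V' (n+1)))
    (hcard : 2 * A.card + B.card < n + 1)
    (hne : ∀ s : ZMod 2, 1 ≤ (A.filter (fun u => u (last n) = s)).card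
      + (B.filter (fun u => u (last n) = s)).card) :
    (∃ x, x ∉ deadF A B) ∧
    (∀ x y, x ∉ deadF A B → y ∉ deadF A B → reachR A B x y) := by
  have hsplitA : ∀ s : ZMod 2, (A.filter (fun u => u (last n) = s)).card
      + (A.filter (fun u => u (last n) = s + 1)).card = A.card := by
    intro s
    rw [← filter_last_neg]
    exact Finset.card_filter_add_card_filter_not _
  have hsplitB : ∀ s : ZMod 2, (B.filter (fun u => u (last n) = s)).card
      + (B.filter (fun u => u (last n) = s + 1)).card = B.card := by
    intro s
    rw [← filter_last_neg]
    exact Finset.card_filter_add_card_filter_not _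
  have hcond : ∀ s : ZMod 2, 2 * (sideA A s).card + (sideA B s ∪ shadowA A s).card < n := by
    intro s
    have h0 := side_cond_card A B s
    rw [filter_last_neg] at h0
    have h1 := hne (s + 1)
    have h2 := hsplitA s
    have h3 := hsplitB s
    linarith
  obtain ⟨⟨x0, hx0⟩, hreach0⟩ := ih _ _ (hcond 0)
  obtain ⟨⟨x1, hx1⟩, hreach1⟩ := ih _ _ (hcond 1)
  have hX0 : (snoc x0 0 : V' (n+1)) ∉ deadF A B := fun h => hx0 (snoc_dead_iff.mp h)
  have hX1 : (snoc x1 1 : V' (n+1)) ∉ deadF A B := fun h => hx1 (snoc_dead_iff.mp h)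
  have h01 : (0 : ZMod 2) + 1 = 1 := rfl
  have hcross : reachR A B (snoc x0 0) (snoc x1 1) := by
    rcases exists_cross A B (by omega) (snoc x0 0) hX0 with hY | ⟨j, hw0, hw1⟩
    · rw [flip_last_snoc, h01] at hY
      refine Relation.ReflTransGen.head ⟨hX0, hY, ?_⟩ ?_
      · refine adj_iff.mpr ⟨last n, ?_⟩
        rw [flip_last_snoc, h01]
      · exact reachR_snoc (hreach1 x0 x1 (fun h => hY (snoc_dead_iff.mpr h)) hx1)
    · rw [flip_castSucc_snoc] at hw0
      rw [flip_last_snoc, h01, flip_castSucc_snoc] at hw1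
      have hstep : stepR A B (snoc (flip j x0) 0) (snoc (flip j x0) 1) := by
        refine ⟨hw0, hw1, adj_iff.mpr ⟨last n, ?_⟩⟩
        rw [flip_last_snoc, h01]
      have hr1 : reachR A B (snoc x0 0) (snoc (flip j x0) 0) :=
        reachR_snoc (hreach0 x0 (flip j x0) hx0 (fun h => hw0 (snoc_dead_iff.mpr h)))
      have hr2 : reachR A B (snoc (flip j x0) 1) (snoc x1 1) :=
        reachR_snoc (hreach1 (flip j x0) x1 (fun h => hw1 (snoc_dead_iff.mpr h)) hx1)
      exact (hr1.tail hstep).trans hr2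
  have hall : ∀ z, z ∉ deadF A B → reachR A B z (snoc x0 0) := by
    intro z hz
    rcases z2cases (z (last n)) with hzl | hzl
    · have hzz : z = snoc (init z) 0 := by rw [← hzl]; exact (Fin.snoc_init_self z).symm
      rw [hzz] at hz ⊢
      exact reachR_snoc (hreach0 (init z) x0 (fun h => hz (snoc_dead_iff.mpr h)) hx0)
    · have hzz : z = snoc (init z) 1 := by rw [← hzl]; exact (Fin.snoc_init_self z).symm
      rw [hzz] at hz ⊢
      refine Relation.ReflTransGen.trans ?_ (reachR_symm hcross)
      exact reachR_snoc (hreach1 (init z) x1 (fun h => hz (snoc_dead_iff.mpr h)) hx1)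
  exact ⟨⟨snoc x0 0, hX0⟩,
    fun x y hx hy => (hall x hx).trans (reachR_symm (hall y hy))⟩

theorem claimC : ∀ n, ClaimP n := by
  intro n
  induction n with
  | zero => exact fun A B h => absurd h (by omega)
  | succ n ih =>
    intro A B hcard
    by_cases hn0 : n = 0
    · subst hn0
      have hA : A = ∅ := Finset.card_eq_zero.mp (Nat.le_zero.mp (by linarith))
      have hB : B = ∅ := Finset.card_eq_zero.mp (Nat.le_zero.mp (by linarith))
      subst hA; subst hB
      have halive : ∀ v : V' 1, v ∉ deadF (∅ : Finset (V' 1)) ∅ := by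
        intro v h
        rw [mem_deadF] at h
        rcases h with ⟨u, hu, _⟩ | h
        · exact absurd hu (Finset.notMem_empty u)
        · exact absurd h (Finset.notMem_empty v)
      refine ⟨⟨fun _ => 0, halive _⟩, fun x y hx hy => ?_⟩
      by_cases hxy : x = y
      · exact hxy ▸ Relation.ReflTransGen.refl
      · refine Relation.ReflTransGen.single ⟨hx, hy, adj_iff.mpr ⟨0, ?_⟩⟩
        funext i
        have hi : i = 0 := Fin.fin_one_eq_zero i
        subst hi
        rw [flip_self]
        refine (z2 (y 0) (x 0)).mp (fun h => hxy ?_)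
        funext i'
        have hi' : i' = 0 := Fin.fin_one_eq_zero i' 
        subst hi'
        exact h.symm
    · have hn1 : 1 ≤ n := Nat.pos_of_ne_zero hn0
      by_cases hE : ∃ s : ZMod 2, A.filter (fun u => u (last n) = s) = ∅ ∧
          B.filter (fun u => u (last n) = s) = ∅
      · obtain ⟨s, h1, h2⟩ := hE
        exact caseEmpty hn1 ih A B hcard s h1 h2
      · push_neg at hE
        refine caseBoth ih A B hcard (fun s => ?_)
        rcases Finset.eq_empty_or_nonempty (A.filter (fun u => u (last n) = s)) with hA | hA
        · have hB := hE s hA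
          have : (B.filter (fun u => u (last n) = s)).Nonempty :=
            hB
          have := Finset.card_pos.mpr this
          linarith
        · have := Finset.card_pos.mpr hA
          linarith

lemma reach_induce {W : Type*} (G : SimpleGraph W) (S : Set W) {x y : W}
    (h : Relation.ReflTransGen (fun a b => a ∈ S ∧ b ∈ S ∧ G.Adj a b) x y)
    (hx : x ∈ S) :
    ∀ hy : y ∈ S, (G.induce S).Reachable ⟨x, hx⟩ ⟨y, hy⟩ := by
  induction h with
  | refl => exact fun _ => SimpleGraph.Reachable.refl _
  | @tail b c h1 h2 ih =>
    intro hy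
    obtain ⟨hb, hc, hadj⟩ := h2
    refine (ih hb).trans (SimpleGraph.Adj.reachable ?_)
    exact hadj

lemma closedNbhd_eq {n} (U : Set (V' n)) (hU : U.Finite) :
    closedNbhd (QCube n 2) U = ↑(deadF hU.toFinset ∅) := by
  ext v
  rw [Finset.mem_coe, mem_deadF]
  constructor
  · rintro (hv | ⟨u, hu, hadj⟩)
    · exact Or.inl ⟨v, hU.mem_toFinset.mpr hv, self_mem_nbhdF v⟩
    · exact Or.inl ⟨u, hU.mem_toFinset.mpr hu, mem_nbhdF_adj.mpr (Or.inr hadj)⟩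
  · rintro (⟨u, hu, hnb⟩ | hv)
    · rcases mem_nbhdF_adj.mp hnb with rfl | hadj
      · exact Or.inl (hU.mem_toFinset.mp hu)
      · exact Or.inr ⟨u, hU.mem_toFinset.mp hu, hadj⟩
    · exact absurd hv (Finset.notMem_empty v)

lemma deadF_card {n} (A : Finset (V' n)) : (deadF A ∅).card ≤ A.card * (n+1) := by
  unfold deadF
  rw [Finset.union_empty]
  refine le_trans (Finset.card_biUnion_le) ?_
  exact Finset.sum_le_card_nsmul _ _ (n+1) (fun u _ => card_nbhdF u)

lemma card_V (n : ℕ) : Fintype.card (V' n) = 2^n := by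
  rw [Fintype.card_fun]
  simp [ZMod.card]

lemma pow_aux : ∀ m : ℕ, 3 ≤ m → m*m + 5 ≤ 2^(m+1) := by
  intro m
  induction m with
  | zero => omega
  | succ m ih =>
    intro hm
    rcases Nat.lt_or_ge m 3 with h3 | h3
    · interval_cases m
      · omega
      · omega
      · norm_num
    · have h1 := ih h3
      have h2 : m < 2^m := Nat.lt_two_pow_self
      have h3' : 2^(m+1) = 2 * 2^m := by rw [pow_succ]; ring
      have h4 : 2^(m+1+1) = 2 * 2^(m+1) := by rw [pow_succ]; ring
      have h5 : (m+1)*(m+1) = m*m + 2*m + 1 := by ring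
      rw [h5, h4]
      linarith

lemma count_aux {n m : ℕ} (hn : 2 ≤ n) (hm : 2*m < n) : m * (n+1) + 3 ≤ 2^n := by
  rcases Nat.lt_or_ge n 3 with h3 | h3
  · have hn2 : n = 2 := by omega
    subst hn2
    have hm0 : m = 0 := by omega
    subst hm0
    norm_num
  · have h1 : (2*m) * (n+1) ≤ (n-1) * (n+1) := Nat.mul_le_mul_right _ (by omega)
    have h1' : (2*m) * (n+1) = 2 * (m * (n+1)) := by ring
    obtain ⟨p, rfl⟩ : ∃ p, n = p + 1 := ⟨n - 1, by omega⟩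
    have h2 : (p+1-1) * (p+1+1) + 1 = (p+1)*(p+1) := by
      have : p+1-1 = p := by omega
      rw [this]; ring
    have h3' := pow_aux (p+1) h3
    have h4 : 2^(p+1+1) = 2 * 2^(p+1) := by rw [pow_succ]; ring
    rw [h4] at h3'
    linarith

lemma no_triangle {n} {x y z : V' n} (hxy : (QCube n 2).Adj x y)
    (hxz : (QCube n 2).Adj x z) (hyz : (QCube n 2).Adj y z) : False := by
  obtain ⟨i, rfl⟩ := adj_iff.mp hxy
  obtain ⟨i', rfl⟩ := adj_iff.mp hxz
  obtain ⟨i'', he⟩ := adj_iff.mp hyz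
  by_cases h1 : i'' = i
  · subst h1
    rw [flip_flip] at he
    exact flip_ne_self i' x he
  · have e1 := congrFun he i
    rw [flip_ne (fun hh => h1 hh.symm), flip_self] at e1
    have hi'i : i' = i := by
      by_contra hne
      rw [flip_ne (fun hh => hne hh.symm)] at e1
      exact z2' (x i) e1
    have e2 := congrFun he i''
    rw [flip_self, flip_ne h1] at e2
    have hi'i'' : i' = i'' := by
      by_contra hne
      rw [flip_ne (fun hh => hne hh.symm)] at e2
      exact z2' (x i'') e2
    exact h1 (hi'i''.symm.trans hi'i)

def cIdx (n i : ℕ) : ℕ := min (2*i) (n-2)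

def uvec (n i : ℕ) : V' n := fun j => if j.val = cIdx n i ∨ j.val = cIdx n i + 1 then 1 else 0

lemma cIdx_mono {n i i' : ℕ} (hn : 2 ≤ n) (hii' : i < i') (hi' : i' < (n+1)/2) :
    cIdx n i < cIdx n i' := by
  unfold cIdx
  omega

lemma uvec_inj {n : ℕ} (hn : 2 ≤ n) : Set.InjOn (uvec n) ↑(Finset.range ((n+1)/2)) := by
  have key : ∀ i i', i < i' → i' < (n+1)/2 → uvec n i ≠ uvec n i' := by
    intro i i' hii' hi' he
    have hlt := cIdx_mono hn hii' hi'
    have hci : cIdx n i < n := by unfold cIdx at *; omega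
    have := congrFun he ⟨cIdx n i, hci⟩
    unfold uvec at this
    rw [if_pos (Or.inl rfl), if_neg (by simp only []; omega)] at this
    exact one_ne_zero this
  intro i hi i' hi' he
  simp only [Finset.coe_range, Set.mem_Iio] at hi hi'
  rcases Nat.lt_trichotomy i i' with h | h | h
  · exact absurd he (key i i' h hi')
  · exact h
  · exact absurd he.symm (key i' i h hi)

lemma uvec_cover {n : ℕ} (hn : 2 ≤ n) (j : Fin n) :
    ∃ i : ℕ, i < (n+1)/2 ∧ (j.val = cIdx n i ∨ j.val = cIdx n i + 1) := by
  refine ⟨min (j.val/2) ((n+1)/2 - 1), ?_, ?_⟩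
  · have := j.isLt
    omega
  · have := j.isLt
    unfold cIdx
    omega

def Uset (n : ℕ) : Set (V' n) := uvec n '' ↑(Finset.range ((n+1)/2))

def zv (n : ℕ) : V' n := fun _ => 0

lemma Uset_finite (n : ℕ) : (Uset n).Finite :=
  Set.Finite.image _ (Finset.finite_toSet _)

lemma Uset_ncard {n : ℕ} (hn : 2 ≤ n) : (Uset n).ncard = (n+1)/2 := by
  unfold Uset
  rw [Set.ncard_image_of_injOn (uvec_inj hn), Set.ncard_coe_finset, Finset.card_range]

lemma uvec_ne_zv {n : ℕ} (hn : 2 ≤ n) (i : ℕ) : uvec n i ≠ zv n := by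
  intro he
  have hci : cIdx n i < n := by unfold cIdx; omega
  have := congrFun he ⟨cIdx n i, hci⟩
  unfold uvec zv at this
  rw [if_pos (Or.inl rfl)] at this
  exact one_ne_zero this

lemma uvec_not_adj_zv {n : ℕ} (hn : 2 ≤ n) (i : ℕ) :
    ¬ (QCube n 2).Adj (uvec n i) (zv n) := by
  intro hadj
  obtain ⟨j', he⟩ := adj_iff.mp hadj
  have hc1 : cIdx n i + 1 < n := by unfold cIdx; omega
  have hc0 : cIdx n i < n := by omega
  have hu1 : uvec n i ⟨cIdx n i, hc0⟩ = 1 := by unfold uvec; rw [if_pos (Or.inl rfl)]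
  have hu2 : uvec n i ⟨cIdx n i + 1, hc1⟩ = 1 := by unfold uvec; rw [if_pos (Or.inr rfl)]
  by_cases hj : j' = (⟨cIdx n i, hc0⟩ : Fin n)
  · have := congrFun he ⟨cIdx n i + 1, hc1⟩
    rw [flip_ne (by rw [hj]; intro hh; rw [Fin.ext_iff] at hh; simp at hh), hu2] at this
    exact one_ne_zero this.symm
  · have := congrFun he ⟨cIdx n i, hc0⟩
    rw [flip_ne (fun hh => hj hh.symm), hu1] at this
    exact one_ne_zero this.symm

lemma nbr_zv_dead {n : ℕ} (hn : 2 ≤ n) (j : Fin n) :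
    flip j (zv n) ∈ closedNbhd (QCube n 2) (Uset n) := by
  obtain ⟨i, hik, hj⟩ := uvec_cover hn j
  have hc1 : cIdx n i + 1 < n := by unfold cIdx; omega
  have hc0 : cIdx n i < n := by omega
  have honeone : (1 : ZMod 2) + 1 = 0 := by decide
  have hUmem : uvec n i ∈ Uset n := ⟨i, by simpa using hik, rfl⟩
  have key : ∀ j' : Fin n, j ≠ j' → (j.val = cIdx n i ∨ j.val = cIdx n i + 1) →
      (j'.val = cIdx n i ∨ j'.val = cIdx n i + 1) →
      flip j (zv n) = flip j' (uvec n i) := by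
    intro j' hne hjv hj'v
    funext m
    by_cases hm1 : m = j
    · subst hm1
      rw [flip_self, flip_ne hne]
      unfold zv uvec
      rw [if_pos hjv]
      decide
    · rw [flip_ne hm1]
      by_cases hm2 : m = j'
      · subst hm2
        rw [flip_self]
        unfold zv uvec
        rw [if_pos hj'v, honeone]
      · rw [flip_ne hm2]
        unfold zv uvec
        have hvne : j.val ≠ j'.val := fun h => hne (Fin.ext h)
        have hmj : m.val ≠ j.val := fun h => hm1 (Fin.ext h)
        have hmj' : m.val ≠ j'.val := fun h => hm2 (Fin.ext h)
        rw [if_neg (by omega)]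
  have hmem : ∀ w : V' n, (∃ u ∈ Uset n, (QCube n 2).Adj u w) →
      w ∈ closedNbhd (QCube n 2) (Uset n) := by
    intro w hw
    exact Set.mem_union_right _ hw
  rcases hj with hv | hv
  · refine hmem _ ⟨uvec n i, hUmem, adj_iff.mpr ⟨⟨cIdx n i + 1, hc1⟩, ?_⟩⟩
    refine key _ (fun hh => ?_) (Or.inl hv) (Or.inr rfl)
    have hh' : j.val = cIdx n i + 1 := congrArg Fin.val hh
    omega
  · refine hmem _ ⟨uvec n i, hUmem, adj_iff.mpr ⟨⟨cIdx n i, hc0⟩, ?_⟩⟩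
    refine key _ (fun hh => ?_) (Or.inr hv) (Or.inl rfl)
    have hh' : j.val = cIdx n i := congrArg Fin.val hh
    omega

lemma zv_alive {n : ℕ} (hn : 2 ≤ n) : zv n ∉ closedNbhd (QCube n 2) (Uset n) := by
  intro h
  rcases h with h | h
  · obtain ⟨i, _, he⟩ := h
    exact uvec_ne_zv hn i he
  · obtain ⟨u, ⟨i, _, rfl⟩, hadj⟩ := h
    exact uvec_not_adj_zv hn i hadj

lemma Uset_bad {n : ℕ} (hn : 2 ≤ n) : SurvivalBad (QCube n 2) (Uset n) := by
  set S := (closedNbhd (QCube n 2) (Uset n))ᶜ with hSdef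
  have h0S : zv n ∈ S := zv_alive hn
  by_cases hex : ∃ w ∈ S, w ≠ zv n
  · left
    refine ⟨Set.nonempty_iff_ne_empty.mp ⟨zv n, h0S⟩, ?_⟩
    intro hconn
    obtain ⟨w, hwS, hw0⟩ := hex
    have hre := hconn.preconnected ⟨zv n, h0S⟩ ⟨w, hwS⟩
    rw [SimpleGraph.reachable_iff_reflTransGen] at hre
    rcases Relation.ReflTransGen.cases_head hre with heq | ⟨c, hadj, _⟩
    · exact hw0 (congrArg Subtype.val heq).symm
    · have hadj' : (QCube n 2).Adj (zv n) c.val := hadj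
      obtain ⟨j, hj⟩ := adj_iff.mp hadj'
      exact c.2 (hj ▸ nbr_zv_dead hn j)
  · right; left
    intro a ha b hb hab
    push_neg at hex
    exact absurd ((hex a ha).trans (hex b hb).symm) hab

lemma lower_bound {n : ℕ} (hn : 2 ≤ n) (W : Set (V' n)) (hWfin : W.Finite)
    (hbad : SurvivalBad (QCube n 2) W) : n < 2 * W.ncard + 1 := by
  by_contra hlt
  push_neg at hlt
  set A := hWfin.toFinset with hAdef
  have hAcard : W.ncard = A.card := Set.ncard_eq_toFinset_card W hWfin
  have hS : closedNbhd (QCube n 2) W = ↑(deadF A ∅) := closedNbhd_eq W hWfin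
  have hcond : 2 * A.card + (∅ : Finset (V' n)).card < n := by
    rw [Finset.card_empty]
    omega
  obtain ⟨⟨x, hx⟩, hreach⟩ := claimC n A ∅ hcond
  set S := (closedNbhd (QCube n 2) W)ᶜ with hSdef
  have hmemS : ∀ v : V' n, v ∈ S ↔ v ∉ deadF A ∅ := by
    intro v
    rw [hSdef, Set.mem_compl_iff, hS, Finset.mem_coe]
  have hxS : x ∈ S := (hmemS x).mpr hx
  rcases hbad with ⟨_, hnc⟩ | hcomp | hemp
  · apply hnc
    rw [SimpleGraph.connected_iff]
    constructor
    · rintro ⟨a, ha2⟩ ⟨b, hb2⟩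
      have hr := hreach a b ((hmemS a).mp ha2) ((hmemS b).mp hb2)
      have hr' : Relation.ReflTransGen
          (fun p q => p ∈ S ∧ q ∈ S ∧ (QCube n 2).Adj p q) a b := by
        refine Relation.ReflTransGen.mono ?_ _ _ hr
        rintro p q ⟨h1, h2, h3⟩
        exact ⟨(hmemS p).mpr h1, (hmemS q).mpr h2, h3⟩
      exact reach_induce (QCube n 2) S hr' ha2 hb2
    · exact ⟨⟨x, hxS⟩⟩
  · have hm2 : 2 * A.card < n := by omega
    have hcard3 : 2 < ((deadF A ∅)ᶜ : Finset (V' n)).card := by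
      rw [Finset.card_compl, card_V]
      have h1 := deadF_card A
      have h2 := count_aux hn hm2
      omega
    obtain ⟨a, b, c, ha, hb, hc, hab, hac, hbc⟩ := Finset.two_lt_card_iff.mp hcard3
    have haS : a ∈ S := (hmemS a).mpr (Finset.mem_compl.mp ha)
    have hbS : b ∈ S := (hmemS b).mpr (Finset.mem_compl.mp hb)
    have hcS : c ∈ S := (hmemS c).mpr (Finset.mem_compl.mp hc)
    exact no_triangle (hcomp a haS b hbS hab) (hcomp a haS c hcS hac) (hcomp b hbS c hcS hbc)
  · rw [hSdef, hemp] at hxS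
    exact Set.notMem_empty x hxS

end NBC

theorem stmt14 (n : ℕ) (hn : 2 ≤ n) :
    nbConn (QCube n 2) = (n + 1) / 2 := by
  have hmem : ((n+1)/2) ∈ {m | ∃ U : Set (V' n), U.Finite ∧ U.ncard = m ∧
      SurvivalBad (QCube n 2) U} :=
    ⟨NBC.Uset n, NBC.Uset_finite n, NBC.Uset_ncard hn, NBC.Uset_bad hn⟩
  unfold nbConn
  apply le_antisymm
  · exact Nat.sInf_le hmem
  · refine le_csInf ⟨_, hmem⟩ ?_
    rintro m ⟨W, hWfin, rfl, hbad⟩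
    have := NBC.lower_bound hn W hWfin hbad
    omega
end

section
/- For n ≥ 2 and k ≥ 3, the neighbor connectivity of the k-ary n-cube Q_n^k equals n. -/
open SimpleGraph

namespace NBAux

/-- unit vector -/
def sgl (m k : ℕ) (i : Fin m) : Fin m → ZMod k := fun j => if j = i then 1 else 0

variable {m k : ℕ}

lemma sgl_apply_self (i : Fin m) : sgl m k i i = 1 := by simp [sgl]

lemma sgl_apply_ne {i j : Fin m} (h : j ≠ i) : sgl m k i j = 0 := by simp [sgl, h]

lemma one_ne_zero' (hk : 3 ≤ k) : (1 : ZMod k) ≠ 0 := by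
  haveI : Fact (1 < k) := ⟨by omega⟩
  exact one_ne_zero

lemma two_ne_zero' (hk : 3 ≤ k) : (2 : ZMod k) ≠ 0 := by
  intro h
  have h2 : ((2:ℕ) : ZMod k) = 0 := by exact_mod_cast h
  rw [ZMod.natCast_eq_zero_iff] at h2
  have := Nat.le_of_dvd (by norm_num) h2
  omega

lemma three_eq_zero_iff (hk : 3 ≤ k) : (3 : ZMod k) = 0 ↔ k = 3 := by
  constructor
  · intro h
    have h2 : ((3:ℕ) : ZMod k) = 0 := by exact_mod_cast h
    rw [ZMod.natCast_eq_zero_iff] at h2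
    have := Nat.le_of_dvd (by norm_num) h2
    omega
  · rintro rfl; decide

/-- adjacency characterization -/
lemma adj_iff (hk : 3 ≤ k) {x y : Fin m → ZMod k} :
    (QCube m k).Adj x y ↔ ∃ i, x = y + sgl m k i ∨ x = y - sgl m k i := by
  constructor
  · rintro ⟨hne, j, hj, hrest⟩
    refine ⟨j, ?_⟩
    rcases hj with h | h
    · left; funext i
      by_cases hij : i = j
      · subst hij; simp [sgl_apply_self, h]
      · simp [sgl_apply_ne hij, hrest i hij]
    · right; funext i
      by_cases hij : i = j
      · subst hij; simp [sgl_apply_self, h, sub_eq_add_neg]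
      · simp [sgl_apply_ne hij, hrest i hij]
  · rintro ⟨i, h | h⟩ <;> subst h
    · refine ⟨?_, i, Or.inl (by simp [sgl_apply_self]), fun j hj => by simp [sgl_apply_ne hj]⟩
      intro h
      have := congrFun h i
      simp [sgl_apply_self] at this
      exact one_ne_zero' hk this
    · refine ⟨?_, i, Or.inr (by simp [sgl_apply_self]), fun j hj => by simp [sgl_apply_ne hj]⟩
      intro h
      have := congrFun h i
      simp [sgl_apply_self, sub_eq_add_neg] at this
      exact one_ne_zero' hk this

/-- closed ball of radius 1 -/
def ballF (m k : ℕ) (u : Fin m → ZMod k) : Finset (Fin m → ZMod k) :=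
  insert u ((Finset.univ.image fun i => u + sgl m k i) ∪
    (Finset.univ.image fun i => u - sgl m k i))

lemma mem_ballF {u x : Fin m → ZMod k} :
    x ∈ ballF m k u ↔ x = u ∨ ∃ i, x = u + sgl m k i ∨ x = u - sgl m k i := by
  simp [ballF, eq_comm, or_assoc, exists_or]

lemma mem_ballF_self (u : Fin m → ZMod k) : u ∈ ballF m k u := by
  simp [ballF]

lemma ballF_card (u : Fin m → ZMod k) : (ballF m k u).card ≤ 2 * m + 1 := by
  unfold ballF
  calc _ ≤ ((Finset.univ.image fun i => u + sgl m k i) ∪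
      (Finset.univ.image fun i => u - sgl m k i)).card + 1 := Finset.card_insert_le _ _
  _ ≤ ((Finset.univ.image fun i => u + sgl m k i).card +
      (Finset.univ.image fun i => u - sgl m k i).card) + 1 :=
        Nat.add_le_add_right (Finset.card_union_le _ _) 1
  _ ≤ (m + m) + 1 := by
        have h1 := Finset.card_image_le (s := (Finset.univ : Finset (Fin m)))
          (f := fun i => u + sgl m k i)
        have h2 := Finset.card_image_le (s := (Finset.univ : Finset (Fin m)))
          (f := fun i => u - sgl m k i)
        simp at h1 h2
        omega
  _ ≤ 2 * m + 1 := by omega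

lemma ballF_symm {u x : Fin m → ZMod k} (h : x ∈ ballF m k u) : u ∈ ballF m k x := by
  rw [mem_ballF] at h ⊢
  rcases h with rfl | ⟨i, rfl | rfl⟩
  · left; rfl
  · right; exact ⟨i, Or.inr (by ring_nf)⟩
  · right; exact ⟨i, Or.inl (by ring_nf)⟩

/-- ball = closed neighborhood -/
lemma mem_ballF_iff_adj (hk : 3 ≤ k) {u x : Fin m → ZMod k} :
    x ∈ ballF m k u ↔ x = u ∨ (QCube m k).Adj u x := by
  rw [mem_ballF]
  constructor
  · rintro (rfl | ⟨i, rfl | rfl⟩)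
    · left; rfl
    · right; rw [adj_iff hk]; exact ⟨i, Or.inr (by ring_nf)⟩
    · right; rw [adj_iff hk]; exact ⟨i, Or.inl (by ring_nf)⟩
  · rintro (rfl | h)
    · left; rfl
    · rw [adj_iff hk] at h
      rcases h with ⟨i, h | h⟩
      · right; exact ⟨i, Or.inr (by rw [h]; ring_nf)⟩
      · right; exact ⟨i, Or.inl (by rw [h]; ring_nf)⟩

/-- set of dead vertices -/
def deadF (B W : Finset (Fin m → ZMod k)) : Finset (Fin m → ZMod k) :=
  B.biUnion (ballF m k) ∪ W

lemma mem_deadF {B W : Finset (Fin m → ZMod k)} {x : Fin m → ZMod k} :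
    x ∈ deadF B W ↔ (∃ u ∈ B, x ∈ ballF m k u) ∨ x ∈ W := by
  simp [deadF]

/-- one step in the survival graph -/
def Stp (B W : Finset (Fin m → ZMod k)) (x y : Fin m → ZMod k) : Prop :=
  (QCube m k).Adj x y ∧ x ∉ deadF B W ∧ y ∉ deadF B W

/-- reachability in the survival graph -/
def Rch (B W : Finset (Fin m → ZMod k)) : (Fin m → ZMod k) → (Fin m → ZMod k) → Prop :=
  Relation.ReflTransGen (Stp B W)

lemma Rch.symm {B W : Finset (Fin m → ZMod k)} {x y : Fin m → ZMod k}
    (h : Rch B W x y) : Rch B W y x :=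
  (@Relation.ReflTransGen.stdSymm _ _ ⟨fun a b hab => ⟨hab.1.symm, hab.2.2, hab.2.1⟩⟩).symm _ _ h


section Slice

variable {m k : ℕ}

lemma tail_add_sgl_succ (u : Fin (m+1) → ZMod k) (i : Fin m) :
    Fin.tail (u + sgl (m+1) k i.succ) = Fin.tail u + sgl m k i := by
  funext t
  simp only [Fin.tail, Pi.add_apply, sgl, Fin.succ_inj]

lemma tail_sub_sgl_succ (u : Fin (m+1) → ZMod k) (i : Fin m) :
    Fin.tail (u - sgl (m+1) k i.succ) = Fin.tail u - sgl m k i := by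
  funext t
  simp only [Fin.tail, Pi.sub_apply, sgl, Fin.succ_inj]

lemma tail_add_sgl_zero (u : Fin (m+1) → ZMod k) :
    Fin.tail (u + sgl (m+1) k 0) = Fin.tail u := by
  funext t
  simp [Fin.tail, sgl, Fin.succ_ne_zero]

lemma tail_sub_sgl_zero (u : Fin (m+1) → ZMod k) :
    Fin.tail (u - sgl (m+1) k 0) = Fin.tail u := by
  funext t
  simp [Fin.tail, sgl, Fin.succ_ne_zero]

lemma apply0_add_sgl_zero (u : Fin (m+1) → ZMod k) :
    (u + sgl (m+1) k 0) 0 = u 0 + 1 := by simp [sgl]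

lemma apply0_sub_sgl_zero (u : Fin (m+1) → ZMod k) :
    (u - sgl (m+1) k 0) 0 = u 0 - 1 := by simp [sgl]

lemma apply0_add_sgl_succ (u : Fin (m+1) → ZMod k) (i : Fin m) :
    (u + sgl (m+1) k i.succ) 0 = u 0 := by
  simp [sgl, (Fin.succ_ne_zero i).symm]

lemma apply0_sub_sgl_succ (u : Fin (m+1) → ZMod k) (i : Fin m) :
    (u - sgl (m+1) k i.succ) 0 = u 0 := by
  simp [sgl, (Fin.succ_ne_zero i).symm]

lemma eq_of_height_tail {x y : Fin (m+1) → ZMod k}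
    (h0 : x 0 = y 0) (ht : Fin.tail x = Fin.tail y) : x = y := by
  have hx := Fin.cons_self_tail x
  have hy := Fin.cons_self_tail y
  rw [← hx, ← hy, h0, ht]

lemma mem_ballF_succ {u x : Fin (m+1) → ZMod k} :
    x ∈ ballF (m+1) k u ↔
      x = u ∨ x = u + sgl (m+1) k 0 ∨ x = u - sgl (m+1) k 0 ∨
        ∃ i : Fin m, x = u + sgl (m+1) k i.succ ∨ x = u - sgl (m+1) k i.succ := by
  rw [mem_ballF]
  constructor
  · rintro (rfl | ⟨i, h⟩)
    · left; rfl
    · rcases Fin.eq_zero_or_eq_succ i with rfl | ⟨i', rfl⟩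
      · rcases h with rfl | rfl
        · right; left; rfl
        · right; right; left; rfl
      · right; right; right; exact ⟨i', h⟩
  · rintro (rfl | rfl | rfl | ⟨i, h⟩)
    · left; rfl
    · right; exact ⟨0, Or.inl rfl⟩
    · right; exact ⟨0, Or.inr rfl⟩
    · right; exact ⟨i.succ, h⟩

/-- Obstacle balls induced in the layer at height `j`. -/
def LBall (B : Finset (Fin (m+1) → ZMod k)) (j : ZMod k) : Finset (Fin m → ZMod k) :=
  (B.filter (fun u => u 0 = j)).image Fin.tail

/-- Obstacle points induced in the layer at height `j`. -/
def LPts (B W : Finset (Fin (m+1) → ZMod k)) (j : ZMod k) : Finset (Fin m → ZMod k) :=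
  ((B.filter (fun u => u 0 = j - 1 ∨ u 0 = j + 1)).image Fin.tail) ∪
    ((W.filter (fun p => p 0 = j)).image Fin.tail)

/-- Slicing: a vertex is dead iff its tail is dead in its layer system. -/
lemma slice (B W : Finset (Fin (m+1) → ZMod k)) (x : Fin (m+1) → ZMod k) :
    x ∈ deadF B W ↔ Fin.tail x ∈ deadF (LBall B (x 0)) (LPts B W (x 0)) := by
  rw [mem_deadF, mem_deadF]
  constructor
  · rintro (⟨u, hu, hx⟩ | hx)
    · rw [mem_ballF_succ] at hx
      rcases hx with rfl | rfl | rfl | ⟨i, rfl | rfl⟩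
      · exact Or.inl ⟨Fin.tail x,
          Finset.mem_image_of_mem _ (Finset.mem_filter.2 ⟨hu, rfl⟩), mem_ballF_self _⟩
      · refine Or.inr (Finset.mem_union_left _ ?_)
        rw [tail_add_sgl_zero, apply0_add_sgl_zero]
        exact Finset.mem_image_of_mem _ (Finset.mem_filter.2 ⟨hu, Or.inl (by ring)⟩)
      · refine Or.inr (Finset.mem_union_left _ ?_)
        rw [tail_sub_sgl_zero, apply0_sub_sgl_zero]
        exact Finset.mem_image_of_mem _ (Finset.mem_filter.2 ⟨hu, Or.inr (by ring)⟩)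
      · refine Or.inl ⟨Fin.tail u, ?_, ?_⟩
        · rw [apply0_add_sgl_succ]
          exact Finset.mem_image_of_mem _ (Finset.mem_filter.2 ⟨hu, rfl⟩)
        · rw [tail_add_sgl_succ, mem_ballF]
          exact Or.inr ⟨i, Or.inl rfl⟩
      · refine Or.inl ⟨Fin.tail u, ?_, ?_⟩
        · rw [apply0_sub_sgl_succ]
          exact Finset.mem_image_of_mem _ (Finset.mem_filter.2 ⟨hu, rfl⟩)
        · rw [tail_sub_sgl_succ, mem_ballF]
          exact Or.inr ⟨i, Or.inr rfl⟩
    · refine Or.inr (Finset.mem_union_right _ ?_)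
      exact Finset.mem_image_of_mem _ (Finset.mem_filter.2 ⟨hx, rfl⟩)
  · rintro (⟨c, hc, htx⟩ | hpt)
    · rw [LBall, Finset.mem_image] at hc
      obtain ⟨u, hu', rfl⟩ := hc
      rw [Finset.mem_filter] at hu'
      obtain ⟨hu, hu0⟩ := hu'
      rw [mem_ballF] at htx
      rcases htx with htx | ⟨i, htx | htx⟩
      · have hxu : x = u := eq_of_height_tail hu0.symm htx
        exact Or.inl ⟨u, hu, hxu ▸ mem_ballF_self u⟩
      · have hxu : x = u + sgl (m+1) k i.succ := by
          apply eq_of_height_tail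
          · rw [apply0_add_sgl_succ, hu0]
          · rw [tail_add_sgl_succ, htx]
        exact Or.inl ⟨u, hu, mem_ballF.2 (Or.inr ⟨i.succ, Or.inl hxu⟩)⟩
      · have hxu : x = u - sgl (m+1) k i.succ := by
          apply eq_of_height_tail
          · rw [apply0_sub_sgl_succ, hu0]
          · rw [tail_sub_sgl_succ, htx]
        exact Or.inl ⟨u, hu, mem_ballF.2 (Or.inr ⟨i.succ, Or.inr hxu⟩)⟩
    · rw [LPts, Finset.mem_union] at hpt
      rcases hpt with hpt | hpt
      · rw [Finset.mem_image] at hpt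
        obtain ⟨u, hu', htail⟩ := hpt
        rw [Finset.mem_filter] at hu'
        obtain ⟨hu, hu0 | hu0⟩ := hu'
        · have hxu : x = u + sgl (m+1) k 0 := by
            apply eq_of_height_tail
            · rw [apply0_add_sgl_zero, hu0]; ring
            · rw [tail_add_sgl_zero, htail]
          exact Or.inl ⟨u, hu, mem_ballF.2 (Or.inr ⟨0, Or.inl hxu⟩)⟩
        · have hxu : x = u - sgl (m+1) k 0 := by
            apply eq_of_height_tail
            · rw [apply0_sub_sgl_zero, hu0]; ring
            · rw [tail_sub_sgl_zero, htail]
          exact Or.inl ⟨u, hu, mem_ballF.2 (Or.inr ⟨0, Or.inr hxu⟩)⟩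
      · rw [Finset.mem_image] at hpt
        obtain ⟨p, hp', htail⟩ := hpt
        rw [Finset.mem_filter] at hp'
        have hxp : x = p := eq_of_height_tail hp'.2.symm htail.symm
        exact Or.inr (hxp ▸ hp'.1)

end Slice


section Count

variable {m k : ℕ}

lemma deadF_card_le (B W : Finset (Fin m → ZMod k)) :
    (deadF B W).card ≤ (2 * m + 1) * B.card + W.card := by
  unfold deadF
  calc (B.biUnion (ballF m k) ∪ W).card ≤ (B.biUnion (ballF m k)).card + W.card :=
        Finset.card_union_le _ _
  _ ≤ (2 * m + 1) * B.card + W.card := by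
      have h := Finset.card_biUnion_le (s := B) (t := ballF m k)
      have h2 : ∑ u ∈ B, (ballF m k u).card ≤ ∑ _u ∈ B, (2 * m + 1) :=
        Finset.sum_le_sum fun u _ => ballF_card u
      simp only [Finset.sum_const, smul_eq_mul] at h2
      have h3 : B.card * (2 * m + 1) = (2 * m + 1) * B.card := Nat.mul_comm _ _
      omega

lemma three_pow_ge : ∀ M : ℕ, 2 ≤ M → 2 * M * M ≤ 3 ^ M := by
  intro M
  induction M with
  | zero => omega
  | succ M ih =>
    intro h
    rcases Nat.lt_or_ge M 2 with hM | hM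
    · interval_cases M <;> norm_num
    · have := ih hM
      have h3 : (3:ℕ) ^ (M + 1) = 3 * 3 ^ M := by ring
      nlinarith

lemma card_fun_eq [NeZero k] : Fintype.card (Fin m → ZMod k) = k ^ m := by
  rw [Fintype.card_fun, ZMod.card, Fintype.card_fin]

lemma exists_of_card_lt {α : Type*} [Fintype α] [DecidableEq α] {s : Finset α}
    (h : s.card < Fintype.card α) : ∃ x, x ∉ s := by
  by_contra hc
  push_neg at hc
  have : s = Finset.univ := Finset.eq_univ_iff_forall.2 hc
  rw [this, Finset.card_univ] at h
  omega

lemma exists_alive (hk : 3 ≤ k) (hm : 1 ≤ m) (B W : Finset (Fin m → ZMod k))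
    (hbud : 2 * B.card + W.card + 1 ≤ 2 * m) : ∃ x, x ∉ deadF B W := by
  haveI : NeZero k := ⟨by omega⟩
  apply exists_of_card_lt
  rw [card_fun_eq]
  have h1 := deadF_card_le B W
  have hBm : B.card + 1 ≤ m := by omega
  have h2 : (2 * m + 1) * B.card + W.card < 2 * m * m := by nlinarith
  have h3 : 3 ^ m ≤ k ^ m := Nat.pow_le_pow_left (by omega) m
  rcases Nat.lt_or_ge m 2 with hm2 | hm2
  · interval_cases m
    · have : B.card = 0 ∧ W.card ≤ 1 := by omega
      have hk3 : 3 ≤ 3 ^ 1 := by norm_num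
      omega
  · have := three_pow_ge m hm2
    omega

end Count

section Heights

variable {m k : ℕ}

/-- number of obstacle balls at height `j` -/
def aH (B : Finset (Fin (m+1) → ZMod k)) (j : ZMod k) : ℕ :=
  (B.filter (fun u => u 0 = j)).card

/-- number of obstacle points at height `j` -/
def wH (W : Finset (Fin (m+1) → ZMod k)) (j : ZMod k) : ℕ :=
  (W.filter (fun p => p 0 = j)).card

/-- number of obstacle points at height other than `j` -/
def owH (W : Finset (Fin (m+1) → ZMod k)) (j : ZMod k) : ℕ :=
  (W.filter (fun p => ¬ p 0 = j)).card

/-- number of obstacle balls at heights other than `j-1, j, j+1` -/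
def γH (B : Finset (Fin (m+1) → ZMod k)) (j : ZMod k) : ℕ :=
  (B.filter (fun u => ¬(u 0 = j - 1 ∨ u 0 = j ∨ u 0 = j + 1))).card

/-- weight of the layer at height `j` -/
def Wt (B W : Finset (Fin (m+1) → ZMod k)) (j : ZMod k) : ℕ :=
  2 * aH B j + (aH B (j-1) + aH B (j+1)) + wH W j

lemma sub_one_ne (hk : 3 ≤ k) (j : ZMod k) : j - 1 ≠ j := by
  intro h
  have : (1 : ZMod k) = 0 := by linear_combination -h
  exact one_ne_zero' hk this

lemma add_one_ne (hk : 3 ≤ k) (j : ZMod k) : j + 1 ≠ j := by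
  intro h
  have : (1 : ZMod k) = 0 := by linear_combination h
  exact one_ne_zero' hk this

lemma sub_one_ne_add_one (hk : 3 ≤ k) (j : ZMod k) : j - 1 ≠ j + 1 := by
  intro h
  have : (2 : ZMod k) = 0 := by linear_combination -h
  exact two_ne_zero' hk this

/-- generic: cardinality of a filter by two disjoint conditions -/
lemma filter_pair_le {α : Type*} [DecidableEq α] (s : Finset α) (p q : α → Prop)
    [DecidablePred p] [DecidablePred q] :
    (s.filter (fun x => p x ∨ q x)).card ≤ (s.filter p).card + (s.filter q).card := by
  rw [Finset.filter_or]
  exact Finset.card_union_le _ _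

lemma layer_budget (B W : Finset (Fin (m+1) → ZMod k)) (j : ZMod k) :
    2 * (LBall B j).card + (LPts B W j).card ≤ Wt B W j := by
  have h1 : (LBall B j).card ≤ aH B j := Finset.card_image_le
  have h2a : ((B.filter (fun u => u 0 = j - 1 ∨ u 0 = j + 1)).image Fin.tail).card
      ≤ (B.filter (fun u => u 0 = j - 1 ∨ u 0 = j + 1)).card := Finset.card_image_le
  have h2b : ((W.filter (fun p => p 0 = j)).image Fin.tail).card ≤ wH W j :=
    Finset.card_image_le
  have h2c : (B.filter (fun u => u 0 = j - 1 ∨ u 0 = j + 1)).card ≤ aH B (j-1) + aH B (j+1) :=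
    filter_pair_le B (fun u => u 0 = j - 1) (fun u => u 0 = j + 1)
  have h2d : (LPts B W j).card ≤ ((B.filter (fun u => u 0 = j - 1 ∨ u 0 = j + 1)).image
      Fin.tail).card + ((W.filter (fun p => p 0 = j)).image Fin.tail).card :=
    Finset.card_union_le _ _
  have : Wt B W j = 2 * aH B j + (aH B (j-1) + aH B (j+1)) + wH W j := rfl
  linarith

/-- partition of the balls by height -/
lemma aH_parts (hk : 3 ≤ k) (B : Finset (Fin (m+1) → ZMod k)) (j : ZMod k) :
    aH B (j-1) + aH B j + aH B (j+1) + γH B j = B.card := by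
  classical
  have key := Finset.card_filter_add_card_filter_not
    (s := B) (p := fun u => u 0 = j - 1 ∨ u 0 = j ∨ u 0 = j + 1)
  have hd2 : Disjoint (B.filter (fun u => u 0 = j)) (B.filter (fun u => u 0 = j + 1)) := by
    rw [Finset.disjoint_left]
    intro u hu1 hu2
    simp only [Finset.mem_filter] at hu1 hu2
    exact add_one_ne hk j (by rw [← hu2.2]; exact hu1.2)
  have hd1 : Disjoint (B.filter (fun u => u 0 = j - 1))
      ((B.filter (fun u => u 0 = j)) ∪ (B.filter (fun u => u 0 = j + 1))) := by
    rw [Finset.disjoint_left]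
    intro u hu1 hu2
    simp only [Finset.mem_filter, Finset.mem_union] at hu1 hu2
    rcases hu2 with ⟨_, h⟩ | ⟨_, h⟩
    · exact sub_one_ne hk j (by rw [← hu1.2, h])
    · exact sub_one_ne_add_one hk j (by rw [← hu1.2, h])
  have h1 : (B.filter (fun u => u 0 = j - 1 ∨ u 0 = j ∨ u 0 = j + 1)).card
      = aH B (j-1) + aH B j + aH B (j+1) := by
    rw [Finset.filter_or, Finset.filter_or]
    rw [Finset.card_union_of_disjoint hd1, Finset.card_union_of_disjoint hd2]
    exact (Nat.add_assoc _ _ _).symm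
  have h2 : (Finset.filter (fun a => ¬(a 0 = j - 1 ∨ a 0 = j ∨ a 0 = j + 1)) B).card
      = γH B j := by
    unfold γH
    congr 1
  linarith

/-- partition of points -/
lemma wH_parts (W : Finset (Fin (m+1) → ZMod k)) (j : ZMod k) :
    wH W j + owH W j = W.card :=
  Finset.card_filter_add_card_filter_not (s := W) (p := fun p => p 0 = j)

lemma wH_le_owH (W : Finset (Fin (m+1) → ZMod k)) {j j' : ZMod k} (h : j' ≠ j) :
    wH W j' ≤ owH W j := by
  apply Finset.card_le_card
  intro p hp
  simp only [Finset.mem_filter] at hp ⊢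
  refine ⟨hp.1, ?_⟩
  rw [hp.2]
  exact h

lemma wH_two_le_owH (W : Finset (Fin (m+1) → ZMod k)) {j j' j'' : ZMod k}
    (h1 : j' ≠ j) (h2 : j'' ≠ j) (h3 : j' ≠ j'') :
    wH W j' + wH W j'' ≤ owH W j := by
  have : Disjoint (W.filter (fun p => p 0 = j')) (W.filter (fun p => p 0 = j'')) := by
    rw [Finset.disjoint_left]
    intro p hp1 hp2
    simp only [Finset.mem_filter] at hp1 hp2
    exact h3 (hp1.2 ▸ hp2.2 ▸ rfl)
  have hsub : (W.filter (fun p => p 0 = j')) ∪ (W.filter (fun p => p 0 = j''))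
      ⊆ W.filter (fun p => ¬ p 0 = j) := by
    intro p hp
    rcases Finset.mem_union.1 hp with hp | hp <;> simp only [Finset.mem_filter] at hp ⊢
    · exact ⟨hp.1, hp.2 ▸ h1⟩
    · exact ⟨hp.1, hp.2 ▸ h2⟩
  calc wH W j' + wH W j'' = ((W.filter (fun p => p 0 = j')) ∪
      (W.filter (fun p => p 0 = j''))).card := (Finset.card_union_of_disjoint this).symm
  _ ≤ owH W j := Finset.card_le_card hsub

lemma aH_le_γH (B : Finset (Fin (m+1) → ZMod k)) {j j' : ZMod k}
    (h1 : j' ≠ j - 1) (h2 : j' ≠ j) (h3 : j' ≠ j + 1) :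
    aH B j' ≤ γH B j := by
  apply Finset.card_le_card
  intro u hu
  simp only [Finset.mem_filter] at hu ⊢
  refine ⟨hu.1, ?_⟩
  rw [hu.2]
  push_neg
  exact ⟨h1, h2, h3⟩

lemma aH_two_le (B : Finset (Fin (m+1) → ZMod k)) {j j' : ZMod k} (h : j ≠ j') :
    aH B j + aH B j' ≤ B.card := by
  have hdisj : Disjoint (B.filter (fun u => u 0 = j)) (B.filter (fun u => u 0 = j')) := by
    rw [Finset.disjoint_left]
    intro u hu1 hu2
    simp only [Finset.mem_filter] at hu1 hu2
    exact h (hu1.2 ▸ hu2.2 ▸ rfl)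
  calc aH B j + aH B j' = ((B.filter (fun u => u 0 = j)) ∪
      (B.filter (fun u => u 0 = j'))).card := (Finset.card_union_of_disjoint hdisj).symm
  _ ≤ B.card := Finset.card_le_card (Finset.union_subset (Finset.filter_subset _ _)
      (Finset.filter_subset _ _))

/-- the fundamental constraint on a bad layer -/
lemma Cj (hk : 3 ≤ k) (B W : Finset (Fin (m+1) → ZMod k)) (j : ZMod k)
    (hbud : 2 * B.card + W.card + 1 ≤ 2 * (m+1))
    (hbad : 2 * m ≤ Wt B W j) :
    aH B (j-1) + aH B (j+1) + 2 * γH B j + owH W j ≤ 1 := by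
  have h1 := aH_parts hk B j
  have h2 := wH_parts W j
  unfold Wt at hbad
  omega

end Heights


section Escape

variable {m k : ℕ}

lemma one_le_aH {B : Finset (Fin (m+1) → ZMod k)} {u : Fin (m+1) → ZMod k} {j : ZMod k}
    (hu : u ∈ B) (h : u 0 = j) : 1 ≤ aH B j :=
  Finset.card_pos.2 ⟨u, Finset.mem_filter.2 ⟨hu, h⟩⟩

lemma one_le_wH {W : Finset (Fin (m+1) → ZMod k)} {p : Fin (m+1) → ZMod k} {j : ZMod k}
    (hp : p ∈ W) (h : p 0 = j) : 1 ≤ wH W j :=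
  Finset.card_pos.2 ⟨p, Finset.mem_filter.2 ⟨hp, h⟩⟩

lemma one_le_γH {B : Finset (Fin (m+1) → ZMod k)} {u : Fin (m+1) → ZMod k} {j : ZMod k}
    (hu : u ∈ B) (h1 : ¬ u 0 = j - 1) (h2 : ¬ u 0 = j) (h3 : ¬ u 0 = j + 1) :
    1 ≤ γH B j :=
  Finset.card_pos.2 ⟨u, Finset.mem_filter.2 ⟨hu, by push_neg; exact ⟨h1, h2, h3⟩⟩⟩

lemma aH_le_card (B : Finset (Fin (m+1) → ZMod k)) (j : ZMod k) : aH B j ≤ B.card :=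
  Finset.card_le_card (Finset.filter_subset _ _)

lemma wH_three_le_card (W : Finset (Fin (m+1) → ZMod k)) {j j' j'' : ZMod k}
    (h1 : j ≠ j') (h2 : j ≠ j'') (h3 : j' ≠ j'') :
    wH W j + wH W j' + wH W j'' ≤ W.card := by
  have e1 : wH W j' + wH W j'' ≤ owH W j := wH_two_le_owH W h1.symm h2.symm h3
  have e2 := wH_parts W j
  omega

lemma sub_two_sgl (h3 : (3 : ZMod k) = 0) (u : Fin m → ZMod k) (i : Fin m) :
    u - sgl m k i - sgl m k i = u + sgl m k i := by
  funext j
  by_cases hj : j = i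
  · subst hj
    simp only [Pi.sub_apply, Pi.add_apply, sgl_apply_self]
    linear_combination -h3
  · simp [sgl_apply_ne hj]

lemma add_two_sgl (h3 : (3 : ZMod k) = 0) (u : Fin m → ZMod k) (i : Fin m) :
    u + sgl m k i + sgl m k i = u - sgl m k i := by
  funext j
  by_cases hj : j = i
  · subst hj
    simp only [Pi.sub_apply, Pi.add_apply, sgl_apply_self]
    linear_combination h3
  · simp [sgl_apply_ne hj]

/-- if the upward neighbour of a live vertex is dead, there is an obstacle above -/
lemma cause_up (hk : 3 ≤ k) {B W : Finset (Fin (m+1) → ZMod k)} {x : Fin (m+1) → ZMod k}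
    (hx : x ∉ deadF B W) (hd : x + sgl (m+1) k 0 ∈ deadF B W) :
    1 ≤ aH B (x 0 + 1) ∨ 1 ≤ wH W (x 0 + 1) ∨ 1 ≤ γH B (x 0) := by
  rw [mem_deadF] at hd
  rcases hd with ⟨u, hu, hball⟩ | hpt
  · rw [mem_ballF_succ] at hball
    rcases hball with h | h | h | ⟨i, h | h⟩
    · left
      apply one_le_aH hu
      rw [← h, apply0_add_sgl_zero]
    · exfalso
      apply hx
      have hxu : x = u := add_right_cancel h
      rw [mem_deadF]
      exact Or.inl ⟨u, hu, hxu ▸ mem_ballF_self u⟩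
    · by_cases h3 : (3 : ZMod k) = 0
      · exfalso
        apply hx
        have hx' : x = u + sgl (m+1) k 0 := by
          have h1 : x = u - sgl (m+1) k 0 - sgl (m+1) k 0 := by
            have := congrArg (fun z => z - sgl (m+1) k 0) h
            simpa using this
          rw [h1, sub_two_sgl h3]
        rw [mem_deadF]
        exact Or.inl ⟨u, hu, mem_ballF.2 (Or.inr ⟨0, Or.inl hx'⟩)⟩
      · right; right
        have hu0 : u 0 = x 0 + 2 := by
          have e := congrArg (fun z => z 0) h
          simp only [apply0_add_sgl_zero, apply0_sub_sgl_zero] at e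
          linear_combination -e
        apply one_le_γH hu
        · rw [hu0]; intro e
          exact h3 (by linear_combination e)
        · rw [hu0]; intro e
          exact two_ne_zero' hk (by linear_combination e)
        · rw [hu0]; intro e
          exact one_ne_zero' hk (by linear_combination e)
    · left
      apply one_le_aH hu
      have e : u 0 = (u + sgl (m+1) k i.succ) 0 := (apply0_add_sgl_succ u i).symm
      rw [e, ← h, apply0_add_sgl_zero]
    · left
      apply one_le_aH hu
      have e : u 0 = (u - sgl (m+1) k i.succ) 0 := (apply0_sub_sgl_succ u i).symm
      rw [e, ← h, apply0_add_sgl_zero]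
  · right; left
    apply one_le_wH hpt
    rw [apply0_add_sgl_zero]

/-- if the downward neighbour of a live vertex is dead, there is an obstacle below -/
lemma cause_down (hk : 3 ≤ k) {B W : Finset (Fin (m+1) → ZMod k)} {x : Fin (m+1) → ZMod k}
    (hx : x ∉ deadF B W) (hd : x - sgl (m+1) k 0 ∈ deadF B W) :
    1 ≤ aH B (x 0 - 1) ∨ 1 ≤ wH W (x 0 - 1) ∨ 1 ≤ γH B (x 0) := by
  rw [mem_deadF] at hd
  rcases hd with ⟨u, hu, hball⟩ | hpt
  · rw [mem_ballF_succ] at hball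
    rcases hball with h | h | h | ⟨i, h | h⟩
    · left
      apply one_le_aH hu
      rw [← h, apply0_sub_sgl_zero]
    · by_cases h3 : (3 : ZMod k) = 0
      · exfalso
        apply hx
        have hx' : x = u - sgl (m+1) k 0 := by
          have h1 : x = u + sgl (m+1) k 0 + sgl (m+1) k 0 := by
            have := congrArg (fun z => z + sgl (m+1) k 0) h
            simpa [sub_add_cancel] using this
          rw [h1, add_two_sgl h3]
        rw [mem_deadF]
        exact Or.inl ⟨u, hu, mem_ballF.2 (Or.inr ⟨0, Or.inr hx'⟩)⟩
      · right; right
        have hu0 : u 0 = x 0 - 2 := by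
          have e := congrArg (fun z => z 0) h
          simp only [apply0_add_sgl_zero, apply0_sub_sgl_zero] at e
          linear_combination -e
        apply one_le_γH hu
        · rw [hu0]; intro e
          exact one_ne_zero' hk (by linear_combination -e)
        · rw [hu0]; intro e
          exact two_ne_zero' hk (by linear_combination -e)
        · rw [hu0]; intro e
          exact h3 (by linear_combination -e)
    · exfalso
      apply hx
      have hxu : x = u := by
        have := congrArg (fun z => z + sgl (m+1) k 0) h
        simpa [sub_add_cancel] using this
      rw [mem_deadF]
      exact Or.inl ⟨u, hu, hxu ▸ mem_ballF_self u⟩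
    · left
      apply one_le_aH hu
      have e : u 0 = (u + sgl (m+1) k i.succ) 0 := (apply0_add_sgl_succ u i).symm
      rw [e, ← h, apply0_sub_sgl_zero]
    · left
      apply one_le_aH hu
      have e : u 0 = (u - sgl (m+1) k i.succ) 0 := (apply0_sub_sgl_succ u i).symm
      rw [e, ← h, apply0_sub_sgl_zero]
  · right; left
    apply one_le_wH hpt
    rw [apply0_sub_sgl_zero]

/-- escape from a single bad layer: some vertical neighbour survives -/
lemma escape_one (hk : 3 ≤ k) {B W : Finset (Fin (m+1) → ZMod k)}
    (hbud : 2 * B.card + W.card + 1 ≤ 2 * (m+1)) {j₀ : ZMod k}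
    (hbad : 2 * m ≤ Wt B W j₀) {x : Fin (m+1) → ZMod k}
    (hx0 : x 0 = j₀) (hx : x ∉ deadF B W) :
    x + sgl (m+1) k 0 ∉ deadF B W ∨ x - sgl (m+1) k 0 ∉ deadF B W := by
  by_contra hcon
  push_neg at hcon
  obtain ⟨hdu, hdd⟩ := hcon
  have hup := cause_up hk hx hdu
  have hdn := cause_down hk hx hdd
  rw [hx0] at hup hdn
  have hC := Cj hk B W j₀ hbud hbad
  have hw1 : wH W (j₀ + 1) + wH W (j₀ - 1) ≤ owH W j₀ :=
    wH_two_le_owH W (add_one_ne hk j₀) (sub_one_ne hk j₀)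
      (Ne.symm (sub_one_ne_add_one hk j₀))
  have hw2 : wH W (j₀ + 1) ≤ owH W j₀ := wH_le_owH W (add_one_ne hk j₀)
  have hw3 : wH W (j₀ - 1) ≤ owH W j₀ := wH_le_owH W (sub_one_ne hk j₀)
  rcases hup with h | h | h <;> rcases hdn with h' | h' | h' <;> omega

/-- escape downward from the lower of two adjacent bad layers -/
lemma escape_dd (hk : 3 ≤ k) (hm : 1 ≤ m) {B W : Finset (Fin (m+1) → ZMod k)}
    (hbud : 2 * B.card + W.card + 1 ≤ 2 * (m+1)) {j₀ : ZMod k}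
    (hbad0 : 2 * m ≤ Wt B W j₀) (hbad1 : 2 * m ≤ Wt B W (j₀ + 1))
    {x : Fin (m+1) → ZMod k} (hx0 : x 0 = j₀) (hx : x ∉ deadF B W) :
    x - sgl (m+1) k 0 ∉ deadF B W := by
  intro hdd
  have hdn := cause_down hk hx hdd
  rw [hx0] at hdn
  have hC0 := Cj hk B W j₀ hbud hbad0
  have hC1 := Cj hk B W (j₀ + 1) hbud hbad1
  have hC1' : aH B j₀ + aH B (j₀ + 1 + 1) + 2 * γH B (j₀ + 1) + owH W (j₀ + 1) ≤ 1 := by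
    have e : j₀ + 1 - 1 = j₀ := by ring
    rwa [e] at hC1
  have hWt0 : Wt B W j₀ = 2 * aH B j₀ + (aH B (j₀-1) + aH B (j₀+1)) + wH W j₀ := rfl
  have hWt1 : Wt B W (j₀+1) = 2 * aH B (j₀+1) + (aH B (j₀+1-1) + aH B (j₀+1+1)) + wH W (j₀+1)
      := rfl
  have e11 : j₀ + 1 - 1 = j₀ := by ring
  rw [e11] at hWt1
  rcases hdn with h | h | h
  · -- a ball at height j₀ - 1
    by_cases h3 : (3 : ZMod k) = 0
    · have e1 : j₀ - 1 = j₀ + 1 + 1 := by linear_combination -h3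
      have ha : 1 ≤ aH B (j₀ + 1 + 1) := by rwa [e1] at h
      have hw : wH W j₀ ≤ owH W (j₀ + 1) := wH_le_owH W (fun e => one_ne_zero' hk
        (by linear_combination -e))
      have he2 : aH B (j₀ - 1) = aH B (j₀ + 1 + 1) := by rw [e1]
      omega
    · have hγ : 1 ≤ γH B (j₀ + 1) := by
        obtain ⟨u, hu⟩ := Finset.card_pos.1 h
        rw [Finset.mem_filter] at hu
        apply one_le_γH hu.1
        · rw [hu.2]; intro e
          exact one_ne_zero' hk (by linear_combination -e)
        · rw [hu.2]; intro e
          exact two_ne_zero' hk (by linear_combination -e)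
        · rw [hu.2]; intro e
          exact h3 (by linear_combination -e)
      omega
  · -- a point at height j₀ - 1
    have hw0 : wH W (j₀ - 1) ≤ owH W j₀ := wH_le_owH W (sub_one_ne hk j₀)
    have hw1 : wH W (j₀ - 1) + wH W (j₀ + 1) ≤ owH W j₀ :=
      wH_two_le_owH W (sub_one_ne hk j₀) (add_one_ne hk j₀) (sub_one_ne_add_one hk j₀)
    have ha2 : aH B (j₀ + 1 + 1) = 0 := by
      by_cases h3 : (3 : ZMod k) = 0
      · have e1 : j₀ + 1 + 1 = j₀ - 1 := by linear_combination h3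
        rw [e1]
        have : aH B (j₀ - 1) ≤ 1 := by omega
        -- need aH (j₀-1) = 0 from hC0 since owH ≥ 1
        omega
      · have : aH B (j₀ + 1 + 1) ≤ γH B j₀ := by
          apply aH_le_γH
          · intro e
            exact h3 (by linear_combination e)
          · intro e
            exact two_ne_zero' hk (by linear_combination e)
          · intro e
            exact one_ne_zero' hk (by linear_combination e)
        omega
    have hacard : aH B j₀ ≤ B.card := aH_le_card B j₀
    omega
  · omega

/-- escape upward from the upper of two adjacent bad layers -/
lemma escape_du (hk : 3 ≤ k) (hm : 1 ≤ m) {B W : Finset (Fin (m+1) → ZMod k)}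
    (hbud : 2 * B.card + W.card + 1 ≤ 2 * (m+1)) {j₀ : ZMod k}
    (hbad0 : 2 * m ≤ Wt B W j₀) (hbad1 : 2 * m ≤ Wt B W (j₀ + 1))
    {x : Fin (m+1) → ZMod k} (hx0 : x 0 = j₀ + 1) (hx : x ∉ deadF B W) :
    x + sgl (m+1) k 0 ∉ deadF B W := by
  intro hdu
  have hupc := cause_up hk hx hdu
  rw [hx0] at hupc
  have hC0 := Cj hk B W j₀ hbud hbad0
  have hC1 := Cj hk B W (j₀ + 1) hbud hbad1
  have e11 : j₀ + 1 - 1 = j₀ := by ring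
  rw [e11] at hC1
  have hWt0 : Wt B W j₀ = 2 * aH B j₀ + (aH B (j₀-1) + aH B (j₀+1)) + wH W j₀ := rfl
  have hWt1 : Wt B W (j₀+1) = 2 * aH B (j₀+1) + (aH B (j₀+1-1) + aH B (j₀+1+1)) + wH W (j₀+1)
      := rfl
  rw [e11] at hWt1
  rcases hupc with h | h | h
  · -- a ball at height j₀ + 2
    by_cases h3 : (3 : ZMod k) = 0
    · have e1 : j₀ + 1 + 1 = j₀ - 1 := by linear_combination h3
      have ha : 1 ≤ aH B (j₀ - 1) := by rwa [e1] at h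
      have he2 : aH B (j₀ + 1 + 1) = aH B (j₀ - 1) := by rw [e1]
      have hw : wH W (j₀ + 1) ≤ owH W j₀ := wH_le_owH W (add_one_ne hk j₀)
      have hsum : aH B j₀ + aH B (j₀ - 1) ≤ B.card :=
        aH_two_le B (Ne.symm (sub_one_ne hk j₀))
      omega
    · have hγ : 1 ≤ γH B j₀ := by
        obtain ⟨u, hu⟩ := Finset.card_pos.1 h
        rw [Finset.mem_filter] at hu
        apply one_le_γH hu.1
        · rw [hu.2]; intro e
          exact h3 (by linear_combination e)
        · rw [hu.2]; intro e
          exact two_ne_zero' hk (by linear_combination e)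
        · rw [hu.2]; intro e
          exact one_ne_zero' hk (by linear_combination e)
      omega
  · -- a point at height j₀ + 2
    have hw1 : wH W (j₀ + 1 + 1) ≤ owH W (j₀ + 1) := wH_le_owH W (add_one_ne hk (j₀+1))
    have hw2 : wH W (j₀ + 1 + 1) ≤ owH W j₀ := wH_le_owH W (fun e => two_ne_zero' hk
      (by linear_combination e))
    have ha1 : aH B (j₀ - 1) = 0 := by
      by_cases h3 : (3 : ZMod k) = 0
      · have e1 : j₀ - 1 = j₀ + 1 + 1 := by linear_combination -h3
        rw [e1]
        omega
      · have : aH B (j₀ - 1) ≤ γH B (j₀ + 1) := by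
          apply aH_le_γH
          · rw [e11]
            exact sub_one_ne hk j₀
          · intro e
            exact two_ne_zero' hk (by linear_combination -e)
          · intro e
            exact h3 (by linear_combination -e)
        omega
    have hw3 : wH W j₀ + wH W (j₀ + 1) + wH W (j₀ + 1 + 1) ≤ W.card := by
      apply wH_three_le_card W (add_one_ne hk j₀).symm
      · intro e
        exact two_ne_zero' hk (by linear_combination -e)
      · exact (add_one_ne hk (j₀+1)).symm
    omega
  · omega

/-- two bad layers must be cyclically adjacent -/
lemma bads_adjacent (hk : 3 ≤ k) (hm : 1 ≤ m) {B W : Finset (Fin (m+1) → ZMod k)}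
    (hbud : 2 * B.card + W.card + 1 ≤ 2 * (m+1)) {j j' : ZMod k}
    (hb : 2 * m ≤ Wt B W j) (hb' : 2 * m ≤ Wt B W j')
    (hne : j ≠ j') (hne1 : j' ≠ j + 1) (hne2 : j' ≠ j - 1) : False := by
  have hC := Cj hk B W j hbud hb
  have hC' := Cj hk B W j' hbud hb'
  have ha' : aH B j' ≤ γH B j := aH_le_γH B hne2 (Ne.symm hne) hne1
  have ha : aH B j ≤ γH B j' := by
    apply aH_le_γH
    · intro e
      exact hne1 (by linear_combination -e)
    · exact hne
    · intro e
      exact hne2 (by linear_combination -e)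
  have hw' : wH W j' ≤ owH W j := wH_le_owH W (Ne.symm hne)
  have hw : wH W j ≤ owH W j' := wH_le_owH W hne
  have hWt : Wt B W j = 2 * aH B j + (aH B (j-1) + aH B (j+1)) + wH W j := rfl
  have hWt' : Wt B W j' = 2 * aH B j' + (aH B (j'-1) + aH B (j'+1)) + wH W j' := rfl
  omega

/-- three consecutive bad layers are impossible -/
lemma no_triple (hk : 3 ≤ k) (hm : 1 ≤ m) {B W : Finset (Fin (m+1) → ZMod k)}
    (hbud : 2 * B.card + W.card + 1 ≤ 2 * (m+1)) {j₀ : ZMod k}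
    (hbm : 2 * m ≤ Wt B W (j₀ - 1)) (hb0 : 2 * m ≤ Wt B W j₀)
    (hbp : 2 * m ≤ Wt B W (j₀ + 1)) : False := by
  by_cases h3 : (3 : ZMod k) = 0
  · have hCm := Cj hk B W (j₀ - 1) hbud hbm
    have hC0 := Cj hk B W j₀ hbud hb0
    have hCp := Cj hk B W (j₀ + 1) hbud hbp
    have e1 : j₀ - 1 - 1 = j₀ + 1 := by linear_combination -h3
    have e2 : j₀ - 1 + 1 = j₀ := by ring
    have e3 : j₀ + 1 - 1 = j₀ := by ring
    have e4 : j₀ + 1 + 1 = j₀ - 1 := by linear_combination h3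
    rw [e1, e2] at hCm
    rw [e3, e4] at hCp
    have hWm : Wt B W (j₀-1) = 2 * aH B (j₀-1) + (aH B (j₀-1-1) + aH B (j₀-1+1)) + wH W (j₀-1)
        := rfl
    have hW0 : Wt B W j₀ = 2 * aH B j₀ + (aH B (j₀-1) + aH B (j₀+1)) + wH W j₀ := rfl
    have hWp : Wt B W (j₀+1) = 2 * aH B (j₀+1) + (aH B (j₀+1-1) + aH B (j₀+1+1)) + wH W (j₀+1)
        := rfl
    rw [e1, e2] at hWm
    rw [e3, e4] at hWp
    have hn1 : j₀ + 1 ≠ j₀ := add_one_ne hk j₀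
    have hn2 : j₀ - 1 ≠ j₀ := sub_one_ne hk j₀
    have hn3 : j₀ + 1 ≠ j₀ - 1 := Ne.symm (sub_one_ne_add_one hk j₀)
    have hw0 : wH W (j₀+1) + wH W (j₀-1) ≤ owH W j₀ := wH_two_le_owH W hn1 hn2 hn3
    have hwm : wH W j₀ + wH W (j₀+1) ≤ owH W (j₀-1) :=
      wH_two_le_owH W hn2.symm (fun e => two_ne_zero' hk (by linear_combination e))
        (fun e => one_ne_zero' hk (by linear_combination -e))
    have hwp : wH W j₀ + wH W (j₀-1) ≤ owH W (j₀+1) :=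
      wH_two_le_owH W hn1.symm (fun e => two_ne_zero' hk (by linear_combination -e))
        (fun e => one_ne_zero' hk (by linear_combination e))
    have hB1 : aH B j₀ + aH B (j₀+1) ≤ B.card := aH_two_le B hn1.symm
    have hparts := aH_parts hk B j₀
    have hwparts := wH_parts W j₀
    omega
  · exact bads_adjacent hk hm hbud hbm hbp
      (fun e => two_ne_zero' hk (by linear_combination -e))
      (fun e => one_ne_zero' hk (by linear_combination e))
      (fun e => h3 (by linear_combination e))

end Escape


section Pair

variable {m k : ℕ}

lemma pow4_ge : ∀ m : ℕ, 1 ≤ m → 2*m*m + 2*m ≤ 4^m + 1 := by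
  intro m
  induction m with
  | zero => omega
  | succ n ih =>
    intro _
    rcases Nat.eq_zero_or_pos n with rfl | hn
    · norm_num
    · have h1 := ih hn
      have h2 : (4:ℕ)^(n+1) = 4 * 4^n := by ring
      nlinarith

lemma pow3_ge : ∀ m : ℕ, 3 ≤ m → 2*m*m + 2*m ≤ 3^m + 1 := by
  intro m
  induction m with
  | zero => omega
  | succ n ih =>
    intro h
    rcases Nat.lt_or_ge n 3 with hn | hn
    · have hn2 : n = 2 := by omega
      subst hn2; norm_num
    · have h1 := ih hn
      have h2 : (3:ℕ)^(n+1) = 3 * 3^n := by ring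
      nlinarith

lemma two_plus_free : ∀ c₁ c₂ : Fin 2 → ZMod 3,
    ∃ b, b ∉ ballF 2 3 c₁ ∧ b ∉ ballF 2 3 c₂ := by decide

lemma filter_pair_eq {α : Type*} [DecidableEq α] (s : Finset α) (p q : α → Prop)
    [DecidablePred p] [DecidablePred q] (hdisj : ∀ x ∈ s, p x → q x → False) :
    (s.filter (fun x => p x ∨ q x)).card = (s.filter p).card + (s.filter q).card := by
  rw [Finset.filter_or]
  apply Finset.card_union_of_disjoint
  rw [Finset.disjoint_left]
  intro x hx1 hx2
  simp only [Finset.mem_filter] at hx1 hx2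
  exact hdisj x hx1.1 hx1.2 hx2.2

/-- between two good consecutive layers there is a surviving vertical edge -/
lemma pair_edge (hk : 3 ≤ k) (hm : 1 ≤ m) {B W : Finset (Fin (m+1) → ZMod k)}
    (hbud : 2 * B.card + W.card + 1 ≤ 2 * (m+1)) (j : ZMod k)
    (hgj : Wt B W j + 1 ≤ 2 * m) (hgj' : Wt B W (j+1) + 1 ≤ 2 * m) :
    ∃ x : Fin (m+1) → ZMod k, x 0 = j ∧ x ∉ deadF B W ∧
      x + sgl (m+1) k 0 ∉ deadF B W := by
  haveI : NeZero k := ⟨by omega⟩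
  classical
  set F2 := B.filter (fun u => u 0 = j ∨ u 0 = j + 1) with hF2
  set FQ := B.filter (fun u => u 0 = j - 1 ∨ u 0 = j + 1 + 1) with hFQ
  set FW := W.filter (fun p => p 0 = j ∨ p 0 = j + 1) with hFW
  set blocked := F2.biUnion (fun u => ballF m k (Fin.tail u)) ∪ FQ.image Fin.tail ∪
    FW.image Fin.tail with hblocked
  -- every dead vertex in the two layers projects into `blocked`
  have key : ∀ y : Fin (m+1) → ZMod k, (y 0 = j ∨ y 0 = j + 1) → y ∈ deadF B W →
      Fin.tail y ∈ blocked := by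
    intro y hy hdead
    rw [mem_deadF] at hdead
    rcases hdead with ⟨u, hu, hball⟩ | hpt
    · rw [mem_ballF_succ] at hball
      rcases hball with h | h | h | ⟨i, h | h⟩
      · subst h
        apply Finset.mem_union_left
        apply Finset.mem_union_left
        exact Finset.mem_biUnion.2 ⟨y, Finset.mem_filter.2 ⟨hu, hy⟩, mem_ballF_self _⟩
      · -- y = u + sgl 0 : u is one layer below y
        have hu0 : u 0 = y 0 - 1 := by
          have := congrArg (fun z => z 0) h
          simp only [apply0_add_sgl_zero] at this
          linear_combination -this
        have ht : Fin.tail y = Fin.tail u := by rw [h, tail_add_sgl_zero]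
        rcases hy with hy | hy
        · apply Finset.mem_union_left
          apply Finset.mem_union_right
          rw [ht]
          exact Finset.mem_image_of_mem _ (Finset.mem_filter.2 ⟨hu, Or.inl (by
            rw [hu0, hy])⟩)
        · apply Finset.mem_union_left
          apply Finset.mem_union_left
          refine Finset.mem_biUnion.2 ⟨u, Finset.mem_filter.2 ⟨hu, Or.inl (by
            rw [hu0, hy]; ring)⟩, ?_⟩
          rw [ht]
          exact mem_ballF_self _
      · -- y = u - sgl 0 : u is one layer above y
        have hu0 : u 0 = y 0 + 1 := by
          have := congrArg (fun z => z 0) h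
          simp only [apply0_sub_sgl_zero] at this
          linear_combination -this
        have ht : Fin.tail y = Fin.tail u := by rw [h, tail_sub_sgl_zero]
        rcases hy with hy | hy
        · apply Finset.mem_union_left
          apply Finset.mem_union_left
          refine Finset.mem_biUnion.2 ⟨u, Finset.mem_filter.2 ⟨hu, Or.inr (by
            rw [hu0, hy])⟩, ?_⟩
          rw [ht]
          exact mem_ballF_self _
        · apply Finset.mem_union_left
          apply Finset.mem_union_right
          rw [ht]
          exact Finset.mem_image_of_mem _ (Finset.mem_filter.2 ⟨hu, Or.inr (by
            rw [hu0, hy])⟩)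
      · have hu0 : u 0 = y 0 := by rw [h, apply0_add_sgl_succ]
        apply Finset.mem_union_left
        apply Finset.mem_union_left
        refine Finset.mem_biUnion.2 ⟨u, Finset.mem_filter.2 ⟨hu, hu0 ▸ hy⟩, ?_⟩
        rw [h, tail_add_sgl_succ, mem_ballF]
        exact Or.inr ⟨i, Or.inl rfl⟩
      · have hu0 : u 0 = y 0 := by rw [h, apply0_sub_sgl_succ]
        apply Finset.mem_union_left
        apply Finset.mem_union_left
        refine Finset.mem_biUnion.2 ⟨u, Finset.mem_filter.2 ⟨hu, hu0 ▸ hy⟩, ?_⟩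
        rw [h, tail_sub_sgl_succ, mem_ballF]
        exact Or.inr ⟨i, Or.inr rfl⟩
    · apply Finset.mem_union_right
      exact Finset.mem_image_of_mem _ (Finset.mem_filter.2 ⟨hpt, hy⟩)
  -- there is a free base point
  have hfree : ∃ b, b ∉ blocked := by
    -- cardinality bounds
    have hX : F2.card ≤ aH B j + aH B (j+1) :=
      filter_pair_le B (fun u => u 0 = j) (fun u => u 0 = j + 1)
    have hQ : FQ.card ≤ aH B (j-1) + aH B (j+1+1) :=
      filter_pair_le B (fun u => u 0 = j - 1) (fun u => u 0 = j + 1 + 1)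
    have hWp : FW.card ≤ wH W j + wH W (j+1) :=
      filter_pair_le W (fun p => p 0 = j) (fun p => p 0 = j + 1)
    have hbc : blocked.card ≤ (2*m+1) * F2.card + FQ.card + FW.card := by
      rw [hblocked]
      have h1 : (F2.biUnion (fun u => ballF m k (Fin.tail u))).card ≤ (2*m+1) * F2.card := by
        have hb := Finset.card_biUnion_le (s := F2) (t := fun u => ballF m k (Fin.tail u))
        have hs : ∑ u ∈ F2, (ballF m k (Fin.tail u)).card ≤ ∑ _u ∈ F2, (2*m+1) :=
          Finset.sum_le_sum fun u _ => ballF_card _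
        simp only [Finset.sum_const, smul_eq_mul] at hs
        have := Nat.mul_comm F2.card (2*m+1)
        omega
      have h2 : (FQ.image Fin.tail).card ≤ FQ.card := Finset.card_image_le
      have h3 : (FW.image Fin.tail).card ≤ FW.card := Finset.card_image_le
      have h4 := Finset.card_union_le (F2.biUnion (fun u => ballF m k (Fin.tail u)) ∪
        FQ.image Fin.tail) (FW.image Fin.tail)
      have h5 := Finset.card_union_le (F2.biUnion (fun u => ballF m k (Fin.tail u)))
        (FQ.image Fin.tail)
      omega
    have hWt : Wt B W j = 2 * aH B j + (aH B (j-1) + aH B (j+1)) + wH W j := rfl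
    have hWt' : Wt B W (j+1) = 2 * aH B (j+1) + (aH B (j+1-1) + aH B (j+1+1)) + wH W (j+1)
        := rfl
    have e11 : j + 1 - 1 = j := by ring
    rw [e11] at hWt'
    have hXB : aH B j + aH B (j+1) ≤ B.card := aH_two_le B (add_one_ne hk j).symm
    by_cases hspec : k = 3 ∧ m = 2
    · -- the exceptional case k = 3, m = 2
      obtain ⟨hk3, hm2⟩ := hspec
      subst hk3; subst hm2
      rcases Nat.lt_or_ge F2.card 2 with hX2 | hX2
      · -- counting suffices
        apply exists_of_card_lt
        rw [card_fun_eq]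
        have : blocked.card < 9 := by omega
        simpa using this
      · -- two balls, one in each layer, and nothing else
        have haj : aH B j = 1 ∧ aH B (j+1) = 1 ∧ aH B (j-1) = 0 ∧ aH B (j+1+1) = 0 ∧
            wH W j = 0 ∧ wH W (j+1) = 0 := by omega
        obtain ⟨ha1, ha2, ha3, ha4, hw1, hw2⟩ := haj
        obtain ⟨u₁, hu₁⟩ := Finset.card_eq_one.1 ha1
        obtain ⟨u₂, hu₂⟩ := Finset.card_eq_one.1 ha2
        have hFQ0 : FQ = ∅ := Finset.card_eq_zero.1 (by omega)
        have hFW0 : FW = ∅ := Finset.card_eq_zero.1 (by omega)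
        obtain ⟨b, hb1, hb2⟩ := two_plus_free (Fin.tail u₁) (Fin.tail u₂)
        refine ⟨b, ?_⟩
        intro hb
        rw [hblocked] at hb
        rcases Finset.mem_union.1 hb with hb | hb
        · rcases Finset.mem_union.1 hb with hb | hb
          · obtain ⟨u, hu, hbu⟩ := Finset.mem_biUnion.1 hb
            rw [hF2, Finset.filter_or] at hu
            rcases Finset.mem_union.1 hu with hu | hu
            · rw [hu₁] at hu
              rw [Finset.mem_singleton.1 hu] at hbu
              exact hb1 hbu
            · rw [hu₂] at hu
              rw [Finset.mem_singleton.1 hu] at hbu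
              exact hb2 hbu
          · rw [hFQ0] at hb
            simp at hb
        · rw [hFW0] at hb
          simp at hb
    · -- the generic case: pure counting
      apply exists_of_card_lt
      rw [card_fun_eq]
      have hcm : B.card ≤ m := by omega
      have hkey : blocked.card + 2 ≤ 2*m*m + 2*m := by nlinarith
      have hpow : 2*m*m + 2*m ≤ k^m + 1 := by
        rcases Nat.lt_or_ge k 4 with hk4 | hk4
        · have hk3 : k = 3 := by omega
          subst hk3
          rcases Nat.lt_or_ge m 3 with hm3 | hm3
          · have hm1 : m = 1 := by
              rcases Nat.lt_or_ge m 2 with h | h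
              · omega
              · exfalso; exact hspec ⟨rfl, by omega⟩
            subst hm1; norm_num
          · exact pow3_ge m hm3
        · calc 2*m*m + 2*m ≤ 4^m + 1 := pow4_ge m hm
          _ ≤ k^m + 1 := by
              have := Nat.pow_le_pow_left hk4 m
              omega
      omega
  obtain ⟨b, hb⟩ := hfree
  refine ⟨(Fin.cons j b : Fin (m+1) → ZMod k), Fin.cons_zero _ _, ?_, ?_⟩
  · intro hdead
    apply hb
    have := key (Fin.cons j b : Fin (m+1) → ZMod k) (Or.inl (Fin.cons_zero _ _)) hdead
    rwa [Fin.tail_cons] at this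
  · intro hdead
    apply hb
    have h0 : ((Fin.cons j b : Fin (m+1) → ZMod k) + sgl (m+1) k 0) 0 = j + 1 := by
      rw [apply0_add_sgl_zero, Fin.cons_zero]
    have := key ((Fin.cons j b : Fin (m+1) → ZMod k) + sgl (m+1) k 0) (Or.inr h0) hdead
    rwa [tail_add_sgl_zero, Fin.tail_cons] at this

end Pair


section Base

variable {m k : ℕ}

lemma adj_add_sgl (hk : 3 ≤ k) (x : Fin m → ZMod k) (i : Fin m) :
    (QCube m k).Adj x (x + sgl m k i) :=
  (adj_iff hk).2 ⟨i, Or.inr (by ring)⟩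

lemma adj_sub_sgl (hk : 3 ≤ k) (x : Fin m → ZMod k) (i : Fin m) :
    (QCube m k).Adj x (x - sgl m k i) :=
  (adj_iff hk).2 ⟨i, Or.inl (by ring)⟩

lemma cast_val [NeZero k] (c : ZMod k) : ((c.val : ℕ) : ZMod k) = c := by
  rw [ZMod.natCast_val, ZMod.cast_id]

lemma val_pos_of_ne [NeZero k] {c : ZMod k} (h : c ≠ 0) : 0 < c.val := by
  rcases Nat.eq_zero_or_pos c.val with h0 | h0
  · exact absurd ((ZMod.val_eq_zero c).1 h0) h
  · exact h0

lemma cast_ne_of_lt_val [NeZero k] {c : ZMod k} {s : ℕ} (hs : s < c.val) :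
    (s : ZMod k) ≠ c := by
  intro e
  have hk0 : s < k := lt_trans hs (ZMod.val_lt c)
  have : ((s : ℕ) : ZMod k).val = c.val := by rw [e]
  rw [ZMod.val_cast_of_lt hk0] at this
  omega

lemma val_add_one [NeZero k] {c : ZMod k} (h : c ≠ -1) : (c + 1).val = c.val + 1 := by
  have hvk := ZMod.val_lt c
  have hk1 : 1 ≤ k := Nat.pos_of_ne_zero (NeZero.ne k)
  have h1 : c.val + 1 < k := by
    rcases Nat.lt_or_ge (c.val + 1) k with h' | h'
    · exact h'
    · exfalso
      apply h
      have hcv : c.val = k - 1 := by omega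
      have : c = ((k - 1 : ℕ) : ZMod k) := by rw [← hcv, cast_val]
      rw [this]
      have hks : ((k : ℕ) : ZMod k) = 0 := ZMod.natCast_self k
      have : ((k - 1 : ℕ) : ZMod k) = ((k : ℕ) : ZMod k) - 1 := by
        push_cast [Nat.cast_sub hk1]
        ring
      rw [this, hks]
      ring
  have e : c + 1 = ((c.val + 1 : ℕ) : ZMod k) := by
    push_cast [cast_val]
    ring
  rw [e, ZMod.val_cast_of_lt h1]

lemma val_sub_one [NeZero k] {c : ZMod k} (h : c ≠ 0) : (c - 1).val = c.val - 1 := by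
  have hv := val_pos_of_ne h
  have hvk := ZMod.val_lt c
  have e : c - 1 = ((c.val - 1 : ℕ) : ZMod k) := by
    push_cast [Nat.cast_sub hv, cast_val]
    ring
  rw [e, ZMod.val_cast_of_lt (by omega)]

/-- one-dimensional vertex -/
def vx (k : ℕ) (c : ZMod k) : Fin 1 → ZMod k := fun _ => c

lemma vx_eq (x : Fin 1 → ZMod k) : x = vx k (x 0) := by
  funext i
  have : i = 0 := Subsingleton.elim _ _
  rw [this]; rfl

lemma vx_add (c : ZMod k) : vx k c + sgl 1 k 0 = vx k (c + 1) := by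
  funext i
  have : i = 0 := Subsingleton.elim _ _
  rw [this]
  simp [vx, sgl_apply_self]

lemma vx_inj {c d : ZMod k} (h : vx k c = vx k d) : c = d := congrFun h 0

/-- base case: the 1-dimensional result -/
lemma conn_base (hk : 3 ≤ k) (B W : Finset (Fin 1 → ZMod k))
    (hbud : 2 * B.card + W.card + 1 ≤ 2 * 1) :
    ∀ x y, x ∉ deadF B W → y ∉ deadF B W → Rch B W x y := by
  haveI : NeZero k := ⟨by omega⟩
  have hB : B = ∅ := Finset.card_eq_zero.1 (by omega)
  have hW1 : W.card ≤ 1 := by omega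
  have hdead : ∀ z : Fin 1 → ZMod k, z ∈ deadF B W ↔ z ∈ W := by
    intro z
    rw [mem_deadF, hB]
    simp
  have hstep : ∀ c : ZMod k, vx k c ∉ W → vx k (c + 1) ∉ W →
      Stp B W (vx k c) (vx k (c+1)) := by
    intro c h1 h2
    refine ⟨?_, ?_, ?_⟩
    · rw [← vx_add]
      exact adj_add_sgl hk _ _
    · rw [hdead]; exact h1
    · rw [hdead]; exact h2
  intro x y hx hy
  rcases Finset.eq_empty_or_nonempty W with hW0 | hWne
  · -- no obstacles at all
    have climb : ∀ t : ℕ, ∀ c : ZMod k, Rch B W (vx k c) (vx k (c + t)) := by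
      intro t
      induction t with
      | zero => intro c; simpa [Rch] using Relation.ReflTransGen.refl
      | succ s ihs =>
        intro c
        have h1 := ihs c
        have h2 : Stp B W (vx k (c + s)) (vx k (c + s + 1)) := by
          apply hstep <;> simp [hW0]
        have e : c + ((s + 1 : ℕ) : ZMod k) = c + s + 1 := by push_cast; ring
        rw [e]
        exact h1.tail h2
    have h1 := climb ((y 0 - x 0).val) (x 0)
    rw [cast_val] at h1
    have e : x 0 + (y 0 - x 0) = y 0 := by ring
    rw [e, ← vx_eq, ← vx_eq] at h1
    exact h1
  · -- one obstacle point p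
    obtain ⟨p, hp⟩ := hWne
    have hWp : W = {p} := by
      apply Finset.eq_singleton_iff_unique_mem.2
      refine ⟨hp, fun q hq => ?_⟩
      by_contra hne
      have : 2 ≤ W.card := Finset.one_lt_card.2 ⟨q, hq, p, hp, hne⟩
      omega
    have halive : ∀ z : Fin 1 → ZMod k, z ∉ deadF B W ↔ z 0 ≠ p 0 := by
      intro z
      rw [hdead, hWp, Finset.mem_singleton]
      constructor
      · intro h he
        apply h
        rw [vx_eq z, vx_eq p, he]
      · intro h he
        rw [he] at h
        exact h rfl
    -- the ladder from p0 + 1 around the cycle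
    have ladder : ∀ s : ℕ, 0 < s → s < k → Rch B W (vx k (p 0 + 1)) (vx k (p 0 + s)) := by
      intro s
      induction s with
      | zero => omega
      | succ t iht =>
        intro _ hsk
        rcases Nat.eq_zero_or_pos t with rfl | ht
        · simpa [Rch] using Relation.ReflTransGen.refl
        · have h1 := iht ht (by omega)
          have h2 : Stp B W (vx k (p 0 + t)) (vx k (p 0 + t + 1)) := by
            apply hstep
            · rw [hWp, Finset.mem_singleton]
              intro he
              have := congrFun he 0
              simp only [vx] at this
              have ht0 : ((t:ℕ) : ZMod k) = 0 := by linear_combination this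
              rw [ZMod.natCast_eq_zero_iff] at ht0
              have := Nat.le_of_dvd ht ht0
              omega
            · rw [hWp, Finset.mem_singleton]
              intro he
              have := congrFun he 0
              simp only [vx] at this
              have ht0 : ((t+1:ℕ) : ZMod k) = 0 := by push_cast; linear_combination this
              rw [ZMod.natCast_eq_zero_iff] at ht0
              have := Nat.le_of_dvd (by omega) ht0
              omega
          have e : p 0 + ((t + 1 : ℕ) : ZMod k) = p 0 + t + 1 := by push_cast; ring
          rw [e]
          exact h1.tail h2
    have hanchor : ∀ z, z ∉ deadF B W → Rch B W (vx k (p 0 + 1)) z := by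
      intro z hz
      have hz0 : z 0 ≠ p 0 := (halive z).1 hz
      have hzp : z 0 - p 0 ≠ 0 := fun e => hz0 (by linear_combination e)
      have h1 := ladder ((z 0 - p 0).val) (val_pos_of_ne hzp) (ZMod.val_lt _)
      rw [cast_val] at h1
      have e : p 0 + (z 0 - p 0) = z 0 := by ring
      rw [e, ← vx_eq] at h1
      exact h1
    exact (hanchor x hx).symm.trans (hanchor y hy)

end Base


section Step

variable {n k : ℕ}

lemma alive_cons {B W : Finset (Fin (n+1) → ZMod k)} (j : ZMod k) (b : Fin n → ZMod k) :
    b ∉ deadF (LBall B j) (LPts B W j) →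
      (Fin.cons j b : Fin (n+1) → ZMod k) ∉ deadF B W := by
  intro hb hc
  apply hb
  have := (slice B W (Fin.cons j b : Fin (n+1) → ZMod k)).1 hc
  rwa [Fin.cons_zero, Fin.tail_cons] at this

lemma cons_add_sgl (j : ZMod k) (b : Fin n → ZMod k) (i : Fin n) :
    (Fin.cons j (b + sgl n k i) : Fin (n+1) → ZMod k) =
      (Fin.cons j b : Fin (n+1) → ZMod k) + sgl (n+1) k i.succ := by
  apply eq_of_height_tail
  · rw [Fin.cons_zero, apply0_add_sgl_succ, Fin.cons_zero]
  · rw [Fin.tail_cons, tail_add_sgl_succ, Fin.tail_cons]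

lemma cons_sub_sgl (j : ZMod k) (b : Fin n → ZMod k) (i : Fin n) :
    (Fin.cons j (b - sgl n k i) : Fin (n+1) → ZMod k) =
      (Fin.cons j b : Fin (n+1) → ZMod k) - sgl (n+1) k i.succ := by
  apply eq_of_height_tail
  · rw [Fin.cons_zero, apply0_sub_sgl_succ, Fin.cons_zero]
  · rw [Fin.tail_cons, tail_sub_sgl_succ, Fin.tail_cons]

lemma lift_step (hk : 3 ≤ k) {B W : Finset (Fin (n+1) → ZMod k)} (j : ZMod k)
    {b b' : Fin n → ZMod k} (h : Stp (LBall B j) (LPts B W j) b b') :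
    Stp B W (Fin.cons j b : Fin (n+1) → ZMod k) (Fin.cons j b' : Fin (n+1) → ZMod k) := by
  obtain ⟨hadj, hb, hb'⟩ := h
  refine ⟨?_, alive_cons j b hb, alive_cons j b' hb'⟩
  rw [adj_iff hk] at hadj ⊢
  obtain ⟨i, hi | hi⟩ := hadj
  · exact ⟨i.succ, Or.inl (by rw [show (Fin.cons j b : Fin (n+1) → ZMod k)
      = Fin.cons j (b' + sgl n k i) from by rw [← hi], cons_add_sgl])⟩
  · exact ⟨i.succ, Or.inr (by rw [show (Fin.cons j b : Fin (n+1) → ZMod k)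
      = Fin.cons j (b' - sgl n k i) from by rw [← hi], cons_sub_sgl])⟩

lemma lift_rch (hk : 3 ≤ k) {B W : Finset (Fin (n+1) → ZMod k)} (j : ZMod k)
    {b b' : Fin n → ZMod k} (h : Rch (LBall B j) (LPts B W j) b b') :
    Rch B W (Fin.cons j b : Fin (n+1) → ZMod k) (Fin.cons j b' : Fin (n+1) → ZMod k) := by
  induction h with
  | refl => exact .refl
  | tail _ hstep ihs => exact ihs.tail (lift_step hk j hstep)

/-- connectivity within a good layer -/
lemma layer_conn (hk : 3 ≤ k) (hn : 1 ≤ n)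
    (ih : ∀ B' W' : Finset (Fin n → ZMod k), 2 * B'.card + W'.card + 1 ≤ 2 * n →
      ∀ x y, x ∉ deadF B' W' → y ∉ deadF B' W' → Rch B' W' x y)
    (B W : Finset (Fin (n+1) → ZMod k)) (j : ZMod k) (hgood : Wt B W j + 1 ≤ 2 * n) :
    ∀ x y : Fin (n+1) → ZMod k, x 0 = j → y 0 = j →
      x ∉ deadF B W → y ∉ deadF B W → Rch B W x y := by
  intro x y hx0 hy0 hx hy
  have hbud' : 2 * (LBall B j).card + (LPts B W j).card + 1 ≤ 2 * n := by
    have := layer_budget B W j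
    omega
  have hcx : Fin.tail x ∉ deadF (LBall B j) (LPts B W j) := by
    intro hc
    apply hx
    have hsx := slice B W x
    rw [hx0] at hsx
    exact hsx.2 hc
  have hcy : Fin.tail y ∉ deadF (LBall B j) (LPts B W j) := by
    intro hc
    apply hy
    have hsy := slice B W y
    rw [hy0] at hsy
    exact hsy.2 hc
  have h := ih (LBall B j) (LPts B W j) hbud' (Fin.tail x) (Fin.tail y) hcx hcy
  have h2 := lift_rch hk j h
  have ex : (Fin.cons j (Fin.tail x) : Fin (n+1) → ZMod k) = x := by
    rw [← hx0]; exact Fin.cons_self_tail x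
  have ey : (Fin.cons j (Fin.tail y) : Fin (n+1) → ZMod k) = y := by
    rw [← hy0]; exact Fin.cons_self_tail y
  rwa [ex, ey] at h2

/-- climbing from a good layer to the next good layer -/
lemma reach_up (hk : 3 ≤ k) (hn : 1 ≤ n)
    (ih : ∀ B' W' : Finset (Fin n → ZMod k), 2 * B'.card + W'.card + 1 ≤ 2 * n →
      ∀ x y, x ∉ deadF B' W' → y ∉ deadF B' W' → Rch B' W' x y)
    {B W : Finset (Fin (n+1) → ZMod k)} (hbud : 2 * B.card + W.card + 1 ≤ 2 * (n+1))
    (j : ZMod k) (hgj : Wt B W j + 1 ≤ 2 * n) (hgj1 : Wt B W (j+1) + 1 ≤ 2 * n) :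
    ∀ x, x 0 = j → x ∉ deadF B W →
      ∃ y, y 0 = j + 1 ∧ y ∉ deadF B W ∧ Rch B W x y := by
  obtain ⟨z, hz0, hza, hza'⟩ := pair_edge hk hn hbud j (by omega) (by omega)
  intro x hx0 hx
  have h1 : Rch B W x z := layer_conn hk hn ih B W j hgj x z hx0 hz0 hx hza
  refine ⟨z + sgl (n+1) k 0, ?_, hza', h1.tail ⟨adj_add_sgl hk z 0, hza, hza'⟩⟩
  rw [apply0_add_sgl_zero, hz0]

/-- the master connectivity argument given at most two adjacent possibly-bad layers
    and an escape map out of them -/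
lemma master (hk : 3 ≤ k) (hn : 1 ≤ n)
    (ih : ∀ B' W' : Finset (Fin n → ZMod k), 2 * B'.card + W'.card + 1 ≤ 2 * n →
      ∀ x y, x ∉ deadF B' W' → y ∉ deadF B' W' → Rch B' W' x y)
    {B W : Finset (Fin (n+1) → ZMod k)} (hbud : 2 * B.card + W.card + 1 ≤ 2 * (n+1))
    (j₀ j₁ : ZMod k) (hj₁ : j₁ = j₀ ∨ j₁ = j₀ + 1)
    (hgood : ∀ j, j ≠ j₀ → j ≠ j₁ → Wt B W j + 1 ≤ 2 * n)
    (hesc : ∀ x, x ∉ deadF B W → (x 0 = j₀ ∨ x 0 = j₁) →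
      ∃ x', x' ∉ deadF B W ∧ (x' 0 ≠ j₀ ∧ x' 0 ≠ j₁) ∧ Rch B W x x') :
    ∀ x y, x ∉ deadF B W → y ∉ deadF B W → Rch B W x y := by
  haveI : NeZero k := ⟨by omega⟩
  have hg1 : Wt B W (j₀ - 1) + 1 ≤ 2 * n := by
    apply hgood _ (sub_one_ne hk j₀)
    rcases hj₁ with rfl | rfl
    · exact sub_one_ne hk j₁
    · exact sub_one_ne_add_one hk j₀
  obtain ⟨b, hb⟩ := exists_alive hk hn (LBall B (j₀-1)) (LPts B W (j₀-1)) (by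
    have := layer_budget B W (j₀-1)
    omega)
  set xs := (Fin.cons (j₀-1) b : Fin (n+1) → ZMod k) with hxs
  have hxsa : xs ∉ deadF B W := alive_cons _ _ hb
  have hxs0 : xs 0 = j₀ - 1 := Fin.cons_zero _ _
  have hne_heights : ∀ c0 : ZMod k, c0 ≠ j₀ → c0 ≠ j₁ → ∀ s : ℕ,
      s < (j₀ - c0).val → (c0 + s ≠ j₀ ∧ c0 + s ≠ j₁) := by
    intro c0 h1 h2 s hs
    constructor
    · intro e
      exact cast_ne_of_lt_val hs (show (s : ZMod k) = j₀ - c0 by linear_combination e)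
    · rcases hj₁ with rfl | rfl
      · intro e
        exact cast_ne_of_lt_val hs (show (s : ZMod k) = j₁ - c0 by linear_combination e)
      · intro e
        have hc1 : j₀ - c0 ≠ -1 := by
          intro e'
          exact h2 (by linear_combination -e')
        have hval := val_add_one hc1
        exact cast_ne_of_lt_val (by omega)
          (show (s : ZMod k) = (j₀ - c0) + 1 by linear_combination e) |>.elim
  have climb : ∀ (t : ℕ) (x : Fin (n+1) → ZMod k), x ∉ deadF B W → x 0 ≠ j₀ →
      x 0 ≠ j₁ → t < (j₀ - x 0).val →
      ∃ y, y 0 = x 0 + t ∧ y ∉ deadF B W ∧ Rch B W x y := by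
    intro t
    induction t with
    | zero =>
      intro x hx _ _ _
      exact ⟨x, by simp, hx, .refl⟩
    | succ s ihs =>
      intro x hx h1 h2 hst
      obtain ⟨y, hy0, hya, hyr⟩ := ihs x hx h1 h2 (by omega)
      have hh := hne_heights (x 0) h1 h2
      have hgs : Wt B W (x 0 + s) + 1 ≤ 2 * n :=
        hgood _ (hh s (by omega)).1 (hh s (by omega)).2
      have hhs1 := hh (s+1) hst
      have e : x 0 + ((s+1 : ℕ) : ZMod k) = x 0 + s + 1 := by push_cast; ring
      rw [e] at hhs1
      have hgs1 : Wt B W (x 0 + s + 1) + 1 ≤ 2 * n := hgood _ hhs1.1 hhs1.2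
      obtain ⟨y', hy'0, hy'a, hy'r⟩ := reach_up hk hn ih hbud (x 0 + s) hgs hgs1 y hy0 hya
      refine ⟨y', ?_, hy'a, hyr.trans hy'r⟩
      rw [hy'0, ← e]
  have reachA : ∀ x, x ∉ deadF B W → x 0 ≠ j₀ → x 0 ≠ j₁ → Rch B W x xs := by
    intro x hx h1 h2
    have hc : (j₀ - x 0) ≠ 0 := fun e => h1 (by linear_combination -e)
    have hcv := val_pos_of_ne hc
    obtain ⟨y, hy0, hya, hyr⟩ := climb ((j₀ - x 0).val - 1) x hx h1 h2 (by omega)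
    have he : x 0 + (((j₀ - x 0).val - 1 : ℕ) : ZMod k) = j₀ - 1 := by
      push_cast [Nat.cast_sub hcv, cast_val]
      ring
    rw [he] at hy0
    exact hyr.trans (layer_conn hk hn ih B W (j₀-1) hg1 y xs hy0 hxs0 hya hxsa)
  have reachAll : ∀ x, x ∉ deadF B W → Rch B W x xs := by
    intro x hx
    by_cases hb0 : x 0 = j₀ ∨ x 0 = j₁
    · obtain ⟨x', hx'a, ⟨h1, h2⟩, hxx'⟩ := hesc x hx hb0
      exact hxx'.trans (reachA x' hx'a h1 h2)
    · push_neg at hb0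
      exact reachA x hx hb0.1 hb0.2
  intro x y hx hy
  exact (reachAll x hx).trans (reachAll y hy).symm

end Step


section Main

variable {k : ℕ}

/-- the full connectivity theorem for ball-and-point obstacle systems -/
theorem conn (hk : 3 ≤ k) : ∀ m, 1 ≤ m → ∀ B W : Finset (Fin m → ZMod k),
    2 * B.card + W.card + 1 ≤ 2 * m →
    ∀ x y, x ∉ deadF B W → y ∉ deadF B W → Rch B W x y := by
  intro m
  induction m with
  | zero => omega
  | succ n ihn =>
    intro _ B W hbud
    rcases Nat.eq_zero_or_pos n with rfl | hn
    · exact conn_base hk B W hbud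
    · have ih := fun B' W' hb => ihn hn B' W' hb
      haveI : NeZero k := ⟨by omega⟩
      by_cases hA : ∀ j : ZMod k, Wt B W j + 1 ≤ 2 * n
      · -- no bad layer
        apply master hk hn ih hbud 0 0 (Or.inl rfl) (fun j _ _ => hA j)
        intro x hx hx0
        have hx0' : x 0 = 0 := by tauto
        obtain ⟨y, hy0, hya, hyr⟩ := reach_up hk hn ih hbud (x 0) (hA _) (hA _) x rfl hx
        refine ⟨y, hya, ?_, hyr⟩
        rw [hy0, hx0']
        constructor <;>
          · intro e
            exact one_ne_zero' hk (by linear_combination e)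
      · push_neg at hA
        obtain ⟨j₀, hj₀⟩ := hA
        have hbad0 : 2 * n ≤ Wt B W j₀ := by omega
        by_cases hBp : 2 * n ≤ Wt B W (j₀ + 1)
        · -- two adjacent bad layers j₀, j₀+1
          have hgood : ∀ j, j ≠ j₀ → j ≠ j₀ + 1 → Wt B W j + 1 ≤ 2 * n := by
            intro j h1 h2
            by_contra hc
            have hbj : 2 * n ≤ Wt B W j := by omega
            by_cases h3 : j = j₀ - 1
            · subst h3
              exact no_triple hk hn hbud hbj hbad0 hBp
            · exact bads_adjacent hk hn hbud hbad0 hbj (Ne.symm h1) h2 h3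
          apply master hk hn ih hbud j₀ (j₀ + 1) (Or.inr rfl) hgood
          intro x hx hx0
          rcases hx0 with hx0 | hx0
          · refine ⟨x - sgl (n+1) k 0, escape_dd hk hn hbud hbad0 hBp hx0 hx, ⟨?_, ?_⟩, ?_⟩
            · rw [apply0_sub_sgl_zero, hx0]
              exact sub_one_ne hk j₀
            · rw [apply0_sub_sgl_zero, hx0]
              exact sub_one_ne_add_one hk j₀
            · exact Relation.ReflTransGen.single
                ⟨adj_sub_sgl hk x 0, hx, escape_dd hk hn hbud hbad0 hBp hx0 hx⟩
          · refine ⟨x + sgl (n+1) k 0, escape_du hk hn hbud hbad0 hBp hx0 hx, ⟨?_, ?_⟩, ?_⟩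
            · rw [apply0_add_sgl_zero, hx0]
              intro e
              exact two_ne_zero' hk (by linear_combination e)
            · rw [apply0_add_sgl_zero, hx0]
              intro e
              exact one_ne_zero' hk (by linear_combination e)
            · exact Relation.ReflTransGen.single
                ⟨adj_add_sgl hk x 0, hx, escape_du hk hn hbud hbad0 hBp hx0 hx⟩
        · by_cases hBm : 2 * n ≤ Wt B W (j₀ - 1)
          · -- two adjacent bad layers j₀ - 1, j₀
            have he1 : j₀ - 1 + 1 = j₀ := by ring
            have hbad1 : 2 * n ≤ Wt B W (j₀ - 1 + 1) := by rw [he1]; exact hbad0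
            have hgood : ∀ j, j ≠ j₀ - 1 → j ≠ j₀ → Wt B W j + 1 ≤ 2 * n := by
              intro j h1 h2
              by_contra hc
              have hbj : 2 * n ≤ Wt B W j := by omega
              by_cases h3 : j = j₀ + 1
              · subst h3
                exact hBp hbj
              · exact bads_adjacent hk hn hbud hbad0 hbj (Ne.symm h2) h3 h1
            apply master hk hn ih hbud (j₀ - 1) j₀ (Or.inr he1.symm) hgood
            intro x hx hx0
            rcases hx0 with hx0 | hx0
            · refine ⟨x - sgl (n+1) k 0, escape_dd hk hn hbud hBm hbad1 hx0 hx, ⟨?_, ?_⟩, ?_⟩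
              · rw [apply0_sub_sgl_zero, hx0]
                exact sub_one_ne hk (j₀ - 1)
              · rw [apply0_sub_sgl_zero, hx0]
                intro e
                exact two_ne_zero' hk (by linear_combination -e)
              · exact Relation.ReflTransGen.single
                  ⟨adj_sub_sgl hk x 0, hx, escape_dd hk hn hbud hBm hbad1 hx0 hx⟩
            · have hx0' : x 0 = j₀ - 1 + 1 := by rw [he1, hx0]
              refine ⟨x + sgl (n+1) k 0, escape_du hk hn hbud hBm hbad1 hx0' hx, ⟨?_, ?_⟩, ?_⟩
              · rw [apply0_add_sgl_zero, hx0]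
                intro e
                exact two_ne_zero' hk (by linear_combination e)
              · rw [apply0_add_sgl_zero, hx0]
                exact add_one_ne hk j₀
              · exact Relation.ReflTransGen.single
                  ⟨adj_add_sgl hk x 0, hx, escape_du hk hn hbud hBm hbad1 hx0' hx⟩
          · -- a single bad layer j₀
            have hgood : ∀ j, j ≠ j₀ → j ≠ j₀ → Wt B W j + 1 ≤ 2 * n := by
              intro j h1 _
              by_contra hc
              have hbj : 2 * n ≤ Wt B W j := by omega
              by_cases h3 : j = j₀ + 1
              · subst h3
                exact hBp hbj
              · by_cases h4 : j = j₀ - 1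
                · subst h4
                  exact hBm hbj
                · exact bads_adjacent hk hn hbud hbad0 hbj (Ne.symm h1) h3 h4
            apply master hk hn ih hbud j₀ j₀ (Or.inl rfl) hgood
            intro x hx hx0
            have hx0' : x 0 = j₀ := by tauto
            rcases escape_one hk hbud hbad0 hx0' hx with hesc | hesc
            · refine ⟨x + sgl (n+1) k 0, hesc, ⟨?_, ?_⟩, ?_⟩
              · rw [apply0_add_sgl_zero, hx0']
                exact add_one_ne hk j₀
              · rw [apply0_add_sgl_zero, hx0']
                exact add_one_ne hk j₀
              · exact Relation.ReflTransGen.single ⟨adj_add_sgl hk x 0, hx, hesc⟩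
            · refine ⟨x - sgl (n+1) k 0, hesc, ⟨?_, ?_⟩, ?_⟩
              · rw [apply0_sub_sgl_zero, hx0']
                exact sub_one_ne hk j₀
              · rw [apply0_sub_sgl_zero, hx0']
                exact sub_one_ne hk j₀
              · exact Relation.ReflTransGen.single ⟨adj_sub_sgl hk x 0, hx, hesc⟩

end Main


section Top

variable {k : ℕ}

lemma adj_opts (hk : 3 ≤ k) {m : ℕ} {x y : Fin m → ZMod k}
    (h : (QCube m k).Adj x y) : ∃ i, y = x + sgl m k i ∨ y = x - sgl m k i := by
  rw [adj_iff hk] at h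
  obtain ⟨i, h | h⟩ := h
  · exact ⟨i, Or.inr (by rw [h]; ring)⟩
  · exact ⟨i, Or.inl (by rw [h]; ring)⟩

lemma opt_ne_at (hk : 3 ≤ k) {m : ℕ} {x y : Fin m → ZMod k} {i : Fin m}
    (h : y = x + sgl m k i ∨ y = x - sgl m k i) :
    y i ≠ x i ∧ ∀ j, j ≠ i → y j = x j := by
  rcases h with rfl | rfl
  · constructor
    · simp only [Pi.add_apply, sgl_apply_self]
      intro e
      exact one_ne_zero' hk (by linear_combination e)
    · intro j hj
      simp [sgl_apply_ne hj]
  · constructor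
    · simp only [Pi.sub_apply, sgl_apply_self]
      intro e
      exact one_ne_zero' hk (by linear_combination -e)
    · intro j hj
      simp [sgl_apply_ne hj]

lemma same_coord (hk : 3 ≤ k) {m : ℕ} {a b c : Fin m → ZMod k} {i j : Fin m}
    (hb : b = a + sgl m k i ∨ b = a - sgl m k i)
    (hc : c = a + sgl m k j ∨ c = a - sgl m k j)
    (hbc : (QCube m k).Adj b c) : i = j := by
  by_contra hij
  obtain ⟨t, ht⟩ := adj_opts hk hbc
  have h1 := opt_ne_at hk ht
  have h2 := opt_ne_at hk hb
  have h3 := opt_ne_at hk hc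
  by_cases hti : t = i
  · subst hti
    have e1 : c j = b j := h1.2 j (fun e => hij e.symm)
    rw [h2.2 j (fun e => hij e.symm)] at e1
    exact h3.1 e1
  · have e1 : c i = b i := h1.2 i (fun e => hti e.symm)
    exact h2.1 (e1.symm.trans (h3.2 i hij))

lemma no_K4 (hk : 3 ≤ k) {m : ℕ} {a b c d : Fin m → ZMod k}
    (hab : (QCube m k).Adj a b) (hac : (QCube m k).Adj a c) (had : (QCube m k).Adj a d)
    (hbc : (QCube m k).Adj b c) (hbd : (QCube m k).Adj b d) (hcd : (QCube m k).Adj c d)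
    (h1 : b ≠ c) (h2 : b ≠ d) (h3 : c ≠ d) : False := by
  obtain ⟨i, hb⟩ := adj_opts hk hab
  obtain ⟨j, hc⟩ := adj_opts hk hac
  obtain ⟨l, hd⟩ := adj_opts hk had
  have hij : i = j := same_coord hk hb hc hbc
  have hil : i = l := same_coord hk hb hd hbd
  subst hij
  subst hil
  rcases hb with rfl | rfl <;> rcases hc with hc | hc <;> rcases hd with hd | hd
  · exact h1 hc.symm
  · exact h1 hc.symm
  · exact h2 hd.symm
  · exact h3 (hc.trans hd.symm)
  · exact h3 (hc.trans hd.symm)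
  · exact h2 hd.symm
  · exact h1 hc.symm
  · exact h1 hc.symm

lemma count_ge_four : ∀ n : ℕ, 2 ≤ n → (2*n+1) * (n-1) + 4 ≤ 3 ^ n := by
  intro n
  induction n with
  | zero => omega
  | succ t iht =>
    intro h
    rcases Nat.lt_or_ge t 2 with ht | ht
    · have : t = 1 := by omega
      subst this
      norm_num
    · have h1 := iht ht
      have h2 : (3:ℕ)^(t+1) = 3 * 3^t := by ring
      obtain ⟨u, rfl⟩ : ∃ u, t = u + 2 := ⟨t - 2, by omega⟩
      have e1 : u + 2 - 1 = u + 1 := by omega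
      have e2 : u + 2 + 1 - 1 = u + 2 := by omega
      rw [e1] at h1
      rw [e2]
      nlinarith

lemma four_distinct {α : Type*} [DecidableEq α] {s : Finset α} (h : 4 ≤ s.card) :
    ∃ a ∈ s, ∃ b ∈ s, ∃ c ∈ s, ∃ d ∈ s,
      a ≠ b ∧ a ≠ c ∧ a ≠ d ∧ b ≠ c ∧ b ≠ d ∧ c ≠ d := by
  obtain ⟨a, ha⟩ := Finset.card_pos.1 (show 0 < s.card by omega)
  have h1 : 3 ≤ (s.erase a).card := by
    rw [Finset.card_erase_of_mem ha]
    omega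
  obtain ⟨b, hb⟩ := Finset.card_pos.1 (show 0 < (s.erase a).card by omega)
  have h2 : 2 ≤ ((s.erase a).erase b).card := by
    rw [Finset.card_erase_of_mem hb]
    omega
  obtain ⟨c, hc⟩ := Finset.card_pos.1 (show 0 < ((s.erase a).erase b).card by omega)
  have h3 : 1 ≤ (((s.erase a).erase b).erase c).card := by
    rw [Finset.card_erase_of_mem hc]
    omega
  obtain ⟨d, hd⟩ := Finset.card_pos.1
    (show 0 < (((s.erase a).erase b).erase c).card by omega)
  refine ⟨a, ha, b, Finset.mem_of_mem_erase hb,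
    c, Finset.mem_of_mem_erase (Finset.mem_of_mem_erase hc),
    d, Finset.mem_of_mem_erase (Finset.mem_of_mem_erase (Finset.mem_of_mem_erase hd)),
    ?_, ?_, ?_, ?_, ?_, ?_⟩
  · exact fun e => Finset.ne_of_mem_erase hb e.symm
  · exact fun e => Finset.ne_of_mem_erase (Finset.mem_of_mem_erase hc) e.symm
  · exact fun e => Finset.ne_of_mem_erase
      (Finset.mem_of_mem_erase (Finset.mem_of_mem_erase hd)) e.symm
  · exact fun e => Finset.ne_of_mem_erase hc e.symm
  · exact fun e => Finset.ne_of_mem_erase (Finset.mem_of_mem_erase hd) e.symm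
  · exact fun e => Finset.ne_of_mem_erase hd e.symm

end Top


section Final

variable {n k : ℕ}

lemma mem_closedNbhd_iff (hk : 3 ≤ k) (U : Set (Fin n → ZMod k)) (hU : U.Finite)
    (x : Fin n → ZMod k) :
    x ∈ closedNbhd (QCube n k) U ↔ x ∈ deadF hU.toFinset (∅ : Finset (Fin n → ZMod k)) := by
  rw [mem_deadF]
  simp only [closedNbhd, Set.mem_union, Set.mem_setOf_eq]
  constructor
  · rintro (hx | ⟨u, hu, hadj⟩)
    · exact Or.inl ⟨x, hU.mem_toFinset.2 hx, mem_ballF_self x⟩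
    · exact Or.inl ⟨u, hU.mem_toFinset.2 hu, (mem_ballF_iff_adj hk).2 (Or.inr hadj)⟩
  · rintro (⟨u, hu, hball⟩ | hW)
    · rcases (mem_ballF_iff_adj hk).1 hball with rfl | hadj
      · exact Or.inl (hU.mem_toFinset.1 hu)
      · exact Or.inr ⟨u, hU.mem_toFinset.1 hu, hadj⟩
    · simp at hW

lemma rch_to_reachable (U : Set (Fin n → ZMod k)) (hU : U.Finite)
    (hcompl : ∀ z, z ∈ (closedNbhd (QCube n k) U)ᶜ ↔
      z ∉ deadF hU.toFinset (∅ : Finset (Fin n → ZMod k)))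
    {x y : Fin n → ZMod k} (h : Rch hU.toFinset ∅ x y) :
    ∀ (hx : x ∈ (closedNbhd (QCube n k) U)ᶜ) (hy : y ∈ (closedNbhd (QCube n k) U)ᶜ),
      (survival (QCube n k) U).Reachable ⟨x, hx⟩ ⟨y, hy⟩ := by
  induction h with
  | refl => intro hx hy; exact SimpleGraph.Reachable.refl _
  | @tail b c hab hstep ihs =>
    intro hx hy
    have hbmem : b ∈ (closedNbhd (QCube n k) U)ᶜ := (hcompl b).2 hstep.2.1
    have hadj : (survival (QCube n k) U).Adj ⟨b, hbmem⟩ ⟨c, hy⟩ := hstep.1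
    exact (ihs hx hbmem).trans hadj.reachable

lemma survival_connected (hk : 3 ≤ k) (hn : 2 ≤ n) (U : Set (Fin n → ZMod k))
    (hU : U.Finite) (hcard : U.ncard < n) : (survival (QCube n k) U).Connected := by
  have hBcard : hU.toFinset.card = U.ncard := (Set.ncard_eq_toFinset_card _ hU).symm
  have hbud : 2 * hU.toFinset.card + (∅ : Finset (Fin n → ZMod k)).card + 1 ≤ 2 * n := by
    simp only [Finset.card_empty]
    omega
  have hcompl : ∀ z, z ∈ (closedNbhd (QCube n k) U)ᶜ ↔
      z ∉ deadF hU.toFinset (∅ : Finset (Fin n → ZMod k)) := by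
    intro z
    rw [Set.mem_compl_iff, not_iff_not]
    exact mem_closedNbhd_iff hk U hU z
  rw [SimpleGraph.connected_iff]
  constructor
  · rintro ⟨x, hx⟩ ⟨y, hy⟩
    have hrch := conn hk n (by omega) hU.toFinset ∅ hbud x y ((hcompl x).1 hx) ((hcompl y).1 hy)
    exact rch_to_reachable U hU hcompl hrch hx hy
  · obtain ⟨x, hx⟩ := exists_alive hk (by omega) hU.toFinset ∅ hbud
    exact ⟨⟨x, (hcompl x).2 hx⟩⟩

/-- a set of fewer than n vertices is not a disconnecting set -/
lemma not_bad (hk : 3 ≤ k) (hn : 2 ≤ n) (U : Set (Fin n → ZMod k)) (hU : U.Finite)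
    (hcard : U.ncard < n) : ¬ SurvivalBad (QCube n k) U := by
  haveI : NeZero k := ⟨by omega⟩
  intro hbad
  have hBcard : hU.toFinset.card = U.ncard := (Set.ncard_eq_toFinset_card _ hU).symm
  have hbud : 2 * hU.toFinset.card + (∅ : Finset (Fin n → ZMod k)).card + 1 ≤ 2 * n := by
    simp only [Finset.card_empty]
    omega
  have hcompl : ∀ z, z ∈ (closedNbhd (QCube n k) U)ᶜ ↔
      z ∉ deadF hU.toFinset (∅ : Finset (Fin n → ZMod k)) := by
    intro z
    rw [Set.mem_compl_iff, not_iff_not]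
    exact mem_closedNbhd_iff hk U hU z
  rcases hbad with ⟨hne, hnc⟩ | hcomp | hempty
  · exact hnc (survival_connected hk hn U hU hcard)
  · -- the complement cannot be complete: it has ≥ 4 vertices but no K₄
    have h4 : 4 ≤ (Finset.univ \ deadF hU.toFinset (∅ : Finset (Fin n → ZMod k))).card := by
      have hd := deadF_card_le hU.toFinset (∅ : Finset (Fin n → ZMod k))
      simp only [Finset.card_empty] at hd
      have hcnt := count_ge_four n hn
      have hpow : 3 ^ n ≤ k ^ n := Nat.pow_le_pow_left (by omega) n
      have hcsd : (Finset.univ \ deadF hU.toFinset (∅ : Finset (Fin n → ZMod k))).card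
          = Fintype.card (Fin n → ZMod k)
            - (deadF hU.toFinset (∅ : Finset (Fin n → ZMod k))).card := by
        rw [Finset.card_sdiff_of_subset (Finset.subset_univ _), Finset.card_univ]
      rw [hcsd, card_fun_eq]
      have hmono : (2*n+1) * hU.toFinset.card ≤ (2*n+1) * (n-1) :=
        Nat.mul_le_mul_left _ (by omega)
      omega
    obtain ⟨a, ha, b, hb, c, hc, d, hd, hab, hac, had, hbc, hbd, hcd⟩ := four_distinct h4
    have hmem : ∀ z ∈ Finset.univ \ deadF hU.toFinset (∅ : Finset (Fin n → ZMod k)),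
        z ∈ (closedNbhd (QCube n k) U)ᶜ := by
      intro z hz
      exact (hcompl z).2 (Finset.mem_sdiff.1 hz).2
    exact no_K4 hk (hcomp a (hmem a ha) b (hmem b hb) hab)
      (hcomp a (hmem a ha) c (hmem c hc) hac)
      (hcomp a (hmem a ha) d (hmem d hd) had)
      (hcomp b (hmem b hb) c (hmem c hc) hbc)
      (hcomp b (hmem b hb) d (hmem d hd) hbd)
      (hcomp c (hmem c hc) d (hmem d hd) hcd) hbc hbd hcd
  · obtain ⟨x, hx⟩ := exists_alive hk (by omega) hU.toFinset ∅ hbud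
    have hxc : x ∈ (closedNbhd (QCube n k) U)ᶜ := (hcompl x).2 hx
    rw [hempty] at hxc
    exact hxc

lemma first_edge {V : Type*} {G : SimpleGraph V} {u v : V} (h : G.Reachable u v)
    (hne : u ≠ v) : ∃ w, G.Adj u w := by
  obtain ⟨p⟩ := h
  induction p with
  | nil => exact absurd rfl hne
  | cons hadj _ => exact ⟨_, hadj⟩

end Final


section Upper

variable {n k : ℕ}

/-- cyclic successor -/
def nxt (n : ℕ) (i : Fin n) : Fin n :=
  if h : i.val + 1 < n then ⟨i.val + 1, h⟩ else ⟨0, lt_of_le_of_lt (Nat.zero_le _) i.isLt⟩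

/-- cyclic predecessor -/
def prv (n : ℕ) (i : Fin n) : Fin n :=
  if _h : i.val = 0 then ⟨n - 1, by omega⟩ else ⟨i.val - 1, by omega⟩

lemma nxt_ne (hn : 2 ≤ n) (i : Fin n) : nxt n i ≠ i := by
  unfold nxt
  split
  · intro e
    have := congrArg Fin.val e
    simp at this
  · intro e
    have := congrArg Fin.val e
    have hi := i.isLt
    simp at this
    omega

lemma nxt_prv (i : Fin n) : nxt n (prv n i) = i := by
  have hi := i.isLt
  unfold nxt prv
  split
  · rename_i h0
    rw [dif_neg (by simp; omega)]
    exact Fin.ext (by simp; omega)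
  · rename_i h0
    rw [dif_pos (by simp; omega)]
    exact Fin.ext (by simp; omega)

/-- the disconnecting set -/
def uvec (n k : ℕ) (i : Fin n) : Fin n → ZMod k :=
  sgl n k i - sgl n k (nxt n i)

lemma uvec_self (hn : 2 ≤ n) (i : Fin n) : uvec n k i i = 1 := by
  unfold uvec
  rw [Pi.sub_apply, sgl_apply_self, sgl_apply_ne (Ne.symm (nxt_ne hn i))]
  ring

lemma uvec_nxt (hn : 2 ≤ n) (i : Fin n) : uvec n k i (nxt n i) = -1 := by
  unfold uvec
  rw [Pi.sub_apply, sgl_apply_self, sgl_apply_ne (nxt_ne hn i)]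
  ring

lemma uvec_other (i : Fin n) {j : Fin n} (h1 : j ≠ i) (h2 : j ≠ nxt n i) :
    uvec n k i j = 0 := by
  unfold uvec
  rw [Pi.sub_apply, sgl_apply_ne h1, sgl_apply_ne h2]
  ring

lemma uvec_inj (hk : 3 ≤ k) (hn : 2 ≤ n) : Function.Injective (uvec n k) := by
  intro i j h
  by_contra hij
  have h1 := congrFun h i
  rw [uvec_self hn] at h1
  by_cases h2 : i = nxt n j
  · rw [h2, uvec_nxt hn] at h1
    exact two_ne_zero' hk (by linear_combination h1)
  · rw [uvec_other j hij h2] at h1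
    exact one_ne_zero' hk h1

/-- there is a disconnecting (or completing) set of size n -/
lemma upper_bad (hk : 3 ≤ k) (hn : 2 ≤ n) :
    ∃ U : Set (Fin n → ZMod k), U.Finite ∧ U.ncard = n ∧ SurvivalBad (QCube n k) U := by
  classical
  set UF : Finset (Fin n → ZMod k) := Finset.univ.image (uvec n k) with hUF
  refine ⟨(UF : Set (Fin n → ZMod k)), Finset.finite_toSet _, ?_, ?_⟩
  · rw [Set.ncard_coe_finset, hUF, Finset.card_image_of_injective _ (uvec_inj hk hn),
      Finset.card_univ, Fintype.card_fin]
  · have hmemU : ∀ i, uvec n k i ∈ (UF : Set (Fin n → ZMod k)) := by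
      intro i
      simp only [Finset.coe_image, Finset.coe_univ, Set.image_univ, Set.mem_range, hUF]
      exact ⟨i, rfl⟩
    have hUmem : ∀ u ∈ (UF : Set (Fin n → ZMod k)), ∃ i, u = uvec n k i := by
      intro u hu
      simp only [hUF, Finset.coe_image, Finset.coe_univ, Set.image_univ, Set.mem_range] at hu
      obtain ⟨i, hi⟩ := hu
      exact ⟨i, hi.symm⟩
    -- the origin survives
    have h0 : (0 : Fin n → ZMod k) ∈ (closedNbhd (QCube n k) (UF : Set _))ᶜ := by
      simp only [Set.mem_compl_iff, closedNbhd, Set.mem_union, Set.mem_setOf_eq]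
      push_neg
      constructor
      · intro hc
        obtain ⟨i, hi⟩ := hUmem _ hc
        have := congrFun hi i
        rw [uvec_self hn, Pi.zero_apply] at this
        exact one_ne_zero' hk this.symm
      · rintro u hu hadj
        obtain ⟨i, rfl⟩ := hUmem _ hu
        obtain ⟨t, ht | ht⟩ := adj_opts hk hadj
        · -- 0 = uvec i + sgl t
          have h1 := congrFun ht i
          rw [Pi.zero_apply, Pi.add_apply, uvec_self hn] at h1
          by_cases hti : t = i
          · subst hti
            rw [sgl_apply_self] at h1
            exact two_ne_zero' hk (by linear_combination -h1)
          · rw [sgl_apply_ne (fun e => hti e.symm)] at h1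
            exact one_ne_zero' hk (by linear_combination -h1)
        · -- 0 = uvec i - sgl t
          have h1 := congrFun ht (nxt n i)
          rw [Pi.zero_apply, Pi.sub_apply, uvec_nxt hn] at h1
          by_cases hti : t = nxt n i
          · subst hti
            rw [sgl_apply_self] at h1
            exact two_ne_zero' hk (by linear_combination h1)
          · rw [sgl_apply_ne (fun e => hti e.symm)] at h1
            exact one_ne_zero' hk (by linear_combination h1)
    -- all neighbours of the origin are dominated
    have hnbr : ∀ z : Fin n → ZMod k, (QCube n k).Adj 0 z →
        z ∈ closedNbhd (QCube n k) (UF : Set _) := by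
      intro z hadj
      obtain ⟨t, ht | ht⟩ := adj_opts hk hadj
      · refine Or.inr ⟨uvec n k t, hmemU t, ?_⟩
        rw [adj_iff hk]
        refine ⟨nxt n t, Or.inr ?_⟩
        rw [ht]
        unfold uvec
        ring
      · refine Or.inr ⟨uvec n k (prv n t), hmemU (prv n t), ?_⟩
        rw [adj_iff hk]
        refine ⟨prv n t, Or.inl ?_⟩
        rw [ht]
        unfold uvec
        rw [nxt_prv]
        ring
    -- now split on whether another vertex survives
    by_cases hz : ∃ z ∈ (closedNbhd (QCube n k) (UF : Set _))ᶜ, z ≠ (0 : Fin n → ZMod k)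
    · left
      obtain ⟨z, hzc, hzne⟩ := hz
      constructor
      · intro he
        rw [he] at h0
        exact h0
      · intro hconn
        have hreach := hconn.preconnected ⟨0, h0⟩ ⟨z, hzc⟩
        have hne : (⟨0, h0⟩ : ↥(closedNbhd (QCube n k) (UF : Set _))ᶜ) ≠ ⟨z, hzc⟩ := by
          intro e
          exact hzne (congrArg Subtype.val e).symm
        obtain ⟨w, hw⟩ := first_edge hreach hne
        have hwadj : (QCube n k).Adj 0 w.val := hw
        exact w.prop (hnbr w.val hwadj)
    · right; left
      push_neg at hz
      intro a ha b hb hab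
      exact absurd ((hz a ha).trans (hz b hb).symm) hab

end Upper

end NBAux

theorem stmt15 (n k : ℕ) (hn : 2 ≤ n) (hk : 3 ≤ k) :
    nbConn (QCube n k) = n := by
  unfold nbConn
  obtain ⟨U₀, hfin₀, hcard₀, hbad₀⟩ := NBAux.upper_bad hk hn
  have hmem : n ∈ {m | ∃ U : Set (Fin n → ZMod k), U.Finite ∧ U.ncard = m ∧
      SurvivalBad (QCube n k) U} := ⟨U₀, hfin₀, hcard₀, hbad₀⟩
  apply le_antisymm
  · exact Nat.sInf_le hmem
  · apply le_csInf ⟨n, hmem⟩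
    rintro m ⟨U, hfin, hcard, hbad⟩
    by_contra hlt
    push_neg at hlt
    exact NBAux.not_bad hk hn U hfin (by omega) hbad
end

section
/- For n ≥ 1 and k ≥ 2, the k-ary n-cube Q_n^k contains no clique on 4 vertices (it is K_4-free). -/
open SimpleGraph

lemma adj_ne_at {k : ℕ} (hk : 2 ≤ k) {x y : ZMod k} (h : x = y + 1 ∨ x = y - 1) : x ≠ y := by
  haveI : Fact (1 < k) := ⟨hk⟩
  rcases h with h | h <;> simp [h, sub_eq_iff_eq_add]

lemma tri_same {n k : ℕ} (hk : 2 ≤ k) {a b c : Fin n → ZMod k} {j₁ j₂ : Fin n}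
    (h1 : a j₁ = b j₁ + 1 ∨ a j₁ = b j₁ - 1) (h1' : ∀ i ≠ j₁, a i = b i)
    (h2 : a j₂ = c j₂ + 1 ∨ a j₂ = c j₂ - 1) (h2' : ∀ i ≠ j₂, a i = c i)
    (hbc : (QCube n k).Adj b c) : j₁ = j₂ := by
  by_contra hne
  obtain ⟨-, j₃, h3, h3'⟩ := hbc
  have hb1 : b j₁ ≠ c j₁ := by
    rw [← h2' j₁ hne]
    exact fun h => adj_ne_at hk h1 h.symm
  have hb2 : b j₂ ≠ c j₂ := by
    rw [← h1' j₂ (Ne.symm hne)]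
    exact adj_ne_at hk h2
  have e1 : j₁ = j₃ := by
    by_contra h; exact hb1 (h3' j₁ h)
  have e2 : j₂ = j₃ := by
    by_contra h; exact hb2 (h3' j₂ h)
  exact hne (e1.trans e2.symm)

theorem stmt17 (n k : ℕ) (hn : 1 ≤ n) (hk : 2 ≤ k) :
    (QCube n k).CliqueFree 4 := by
  intro t ht
  obtain ⟨hclique, hcard⟩ := ht
  obtain ⟨a, ha⟩ := Finset.card_pos.mp (by omega : 0 < t.card)
  have hcard3 : (t.erase a).card = 3 := by
    rw [Finset.card_erase_of_mem ha, hcard]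
  obtain ⟨b, c, d, hbc, hbd, hcd, he⟩ := Finset.card_eq_three.mp hcard3
  have hb : b ∈ t.erase a := by rw [he]; simp
  have hc : c ∈ t.erase a := by rw [he]; simp
  have hd : d ∈ t.erase a := by rw [he]; simp
  have hab : a ≠ b := (Finset.ne_of_mem_erase hb).symm
  have hac : a ≠ c := (Finset.ne_of_mem_erase hc).symm
  have had : a ≠ d := (Finset.ne_of_mem_erase hd).symm
  have hb' := Finset.mem_of_mem_erase hb
  have hc' := Finset.mem_of_mem_erase hc
  have hd' := Finset.mem_of_mem_erase hd
  have Aab := hclique ha hb' hab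
  have Aac := hclique ha hc' hac
  have Aad := hclique ha hd' had
  have Abc := hclique hb' hc' hbc
  have Abd := hclique hb' hd' hbd
  have Acd := hclique hc' hd' hcd
  obtain ⟨-, j, hj, hjrest⟩ := Aab
  obtain ⟨-, j₂, hj2, hj2rest⟩ := Aac
  obtain ⟨-, j₃, hj3, hj3rest⟩ := Aad
  have e2 : j = j₂ := tri_same hk hj hjrest hj2 hj2rest Abc
  have e3 : j = j₃ := tri_same hk hj hjrest hj3 hj3rest Abd
  subst e2; subst e3
  -- b j, c j, d j ∈ {a j - 1, a j + 1}
  have vb : b j = a j - 1 ∨ b j = a j + 1 := by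
    rcases hj with h | h
    · left; rw [h]; ring
    · right; rw [h]; ring
  have vc : c j = a j - 1 ∨ c j = a j + 1 := by
    rcases hj2 with h | h
    · left; rw [h]; ring
    · right; rw [h]; ring
  have vd : d j = a j - 1 ∨ d j = a j + 1 := by
    rcases hj3 with h | h
    · left; rw [h]; ring
    · right; rw [h]; ring
  have key : ∀ x y : Fin n → ZMod k, x j = y j →
      (∀ i ≠ j, a i = x i) → (∀ i ≠ j, a i = y i) → x = y := by
    intro x y hxy hx hy
    funext i
    by_cases hij : i = j
    · subst hij; exact hxy
    · rw [← hx i hij, hy i hij]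
  rcases vb with vb | vb <;> rcases vc with vc | vc <;> rcases vd with vd | vd
  · exact hbc (key b c (vb.trans vc.symm) hjrest hj2rest)
  · exact hbc (key b c (vb.trans vc.symm) hjrest hj2rest)
  · exact hbd (key b d (vb.trans vd.symm) hjrest hj3rest)
  · exact hcd (key c d (vc.trans vd.symm) hj2rest hj3rest)
  · exact hcd (key c d (vc.trans vd.symm) hj2rest hj3rest)
  · exact hbd (key b d (vb.trans vd.symm) hjrest hj3rest)
  · exact hbc (key b c (vb.trans vc.symm) hjrest hj2rest)
  · exact hbc (key b c (vb.trans vc.symm) hjrest hj2rest)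
end

section
/- Let n, k ≥ 3, let U be a set of ℓ vertices of Q_n^k with 0 ≤ ℓ ≤ n−1, fix a coordinate d and values i, j ∈ Z_k with |i−j| ≡ ±1 (mod k), and let Q[i], Q[j] be the corresponding adjacent subcubes. Let u_i = |U ∩ V(Q[i])|, u_j = |U ∩ V(Q[j])|, and h = 2n − 2 − ℓ − u_i − u_j. Then the number of vertices v of Q[i] such that both v and its outer neighbor v^j in Q[j] lie outside N[U] is strictly greater than h. -/
open SimpleGraph

section Aux
variable {n k : ℕ}

/-- "u kills v" : v or its outer neighbor is in the closed neighborhood of u. -/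
def kill (d : Fin n) (j : ZMod k) (u v : Fin n → ZMod k) : Prop :=
  v = u ∨ (QCube n k).Adj u v ∨ Function.update v d j = u ∨
    (QCube n k).Adj u (Function.update v d j)

def Fmap (d : Fin n) (i : ZMod k) (u : Fin n → ZMod k) :
    Option ({c : Fin n // c ≠ d} × Bool) → (Fin n → ZMod k)
  | none => Function.update u d i
  | some p => Function.update (Function.update u d i) p.1.1
      (u p.1.1 + if p.2 then 1 else -1)


lemma eq_upd {v u : Fin n → ZMod k} {d : Fin n} {i : ZMod k}
    (hd : v d = i) (ho : ∀ e, e ≠ d → v e = u e) : v = Function.update u d i := by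
  funext e
  by_cases he : e = d
  · subst he; simpa [Function.update_apply] using hd
  · simp [Function.update_apply, he, ho e he]

lemma eq_upd2 {v u : Fin n → ZMod k} {d c : Fin n} {i x : ZMod k} (hcd : c ≠ d)
    (hd : v d = i) (hc : v c = x) (ho : ∀ e, e ≠ d → e ≠ c → v e = u e) :
    v = Function.update (Function.update u d i) c x := by
  funext e
  by_cases hec : e = c
  · subst hec; simpa [Function.update_apply, hcd] using hc
  · by_cases hed : e = d
    · subst hed; simpa [Function.update_apply, hec] using hd
    · simp [Function.update_apply, hec, hed, ho e hed hec]

lemma kill_subset_range (d : Fin n) (i j : ZMod k) (u : Fin n → ZMod k) :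
    {v | v d = i ∧ kill d j u v} ⊆ Set.range (Fmap d i u) := by
  rintro v ⟨hvd, hkill⟩
  rcases hkill with h | ⟨hne, c, hc, hrest⟩ | h | ⟨hne, c, hc, hrest⟩
  · -- v = u
    exact ⟨none, (eq_upd hvd (fun e _ => by rw [h])).symm⟩
  · -- Adj u v
    by_cases hcd : c = d
    · subst hcd
      exact ⟨none, (eq_upd hvd (fun e he => (hrest e he).symm)).symm⟩
    · by_cases h2 : u c = v c + 1
      · refine ⟨some ⟨⟨c, hcd⟩, false⟩, (eq_upd2 hcd hvd ?_ ?_ : v = _).symm⟩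
        · show v c = u c + if false then 1 else -1
          rw [h2]; simp
        · exact fun e hed hec => (hrest e hec).symm
      · have h1 : u c = v c - 1 := hc.resolve_left h2
        refine ⟨some ⟨⟨c, hcd⟩, true⟩, (eq_upd2 hcd hvd ?_ ?_ : v = _).symm⟩
        · show v c = u c + if true then 1 else -1
          rw [h1]; simp
        · exact fun e hed hec => (hrest e hec).symm
  · -- update v d j = u
    refine ⟨none, (eq_upd hvd (fun e he => ?_) : v = _).symm⟩
    have := congrFun h e
    simpa [Function.update_apply, he] using this
  · -- Adj u (update v d j)
    by_cases hcd : c = d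
    · subst hcd
      refine ⟨none, (eq_upd hvd (fun e he => ?_) : v = _).symm⟩
      have := (hrest e he).symm
      simpa [Function.update_apply, he] using this
    · have hvc : Function.update v d j c = v c := by
        simp [Function.update_apply, hcd]
      rw [hvc] at hc
      by_cases h2 : u c = v c + 1
      · refine ⟨some ⟨⟨c, hcd⟩, false⟩, (eq_upd2 hcd hvd ?_ ?_ : v = _).symm⟩
        · show v c = u c + if false then 1 else -1
          rw [h2]; simp
        · intro e hed hec
          have := (hrest e hec).symm
          simpa [Function.update_apply, hed] using this
      · have h1 : u c = v c - 1 := hc.resolve_left h2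
        refine ⟨some ⟨⟨c, hcd⟩, true⟩, (eq_upd2 hcd hvd ?_ ?_ : v = _).symm⟩
        · show v c = u c + if true then 1 else -1
          rw [h1]; simp
        · intro e hed hec
          have := (hrest e hec).symm
          simpa [Function.update_apply, hed] using this

lemma kill_subset_single (d : Fin n) (i j : ZMod k) (u : Fin n → ZMod k)
    (h1 : u d ≠ i) (h2 : u d ≠ j) :
    {v | v d = i ∧ kill d j u v} ⊆ {Function.update u d i} := by
  rintro v ⟨hvd, hkill⟩
  rcases hkill with h | ⟨hne, c, hc, hrest⟩ | h | ⟨hne, c, hc, hrest⟩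
  · exact absurd (h ▸ hvd) h1
  · by_cases hcd : c = d
    · subst hcd
      have : v = Function.update u c i := by
        funext e
        by_cases he : e = c
        · subst he; simp [Function.update_apply, hvd]
        · simp [Function.update_apply, he, (hrest e he).symm]
      exact this
    · exact absurd ((hrest d (fun h => hcd h.symm)).trans hvd) h1
  · have : u d = j := by rw [← h]; simp
    exact absurd this h2
  · by_cases hcd : c = d
    · subst hcd
      have : v = Function.update u c i := by
        funext e
        by_cases he : e = c
        · subst he; simp [Function.update_apply, hvd]
        · have := hrest e he
          simp [Function.update_apply, he] at this
          simp [Function.update_apply, he, ← this]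
      exact this
    · have := hrest d (fun h => hcd h.symm)
      simp [Function.update_apply] at this
      exact absurd this h2

end Aux

lemma three_pow_big : ∀ m : ℕ, 2*(m+4)*(m+4) + 1 < 3^(m+3) + 3*(m+4) := by
  intro m
  induction m with
  | zero => norm_num
  | succ p ih =>
    have h3 : 3^(p+1+3) = 3 * 3^(p+3) := by ring
    rw [h3]
    nlinarith [ih, sq_nonneg p]

lemma pow_gt (n k s : ℕ) (hn : 3 ≤ n) (hk : 3 ≤ k) (hs : s ≤ n - 1)
    (hx : ¬(n = 3 ∧ k = 3 ∧ s = 2)) : 2*n - 2 + (2*n - 3) * s < k^(n-1) := by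
  have hk' : 3^(n-1) ≤ k^(n-1) := Nat.pow_le_pow_left hk _
  rcases Nat.lt_or_ge n 4 with h4 | h4
  · have hn3 : n = 3 := by omega
    subst hn3
    have h9 : (3:ℕ)^(3-1) = 9 := by norm_num
    rw [h9] at hk'
    rcases Nat.lt_or_ge k 4 with hk4 | hk4
    · have hk3 : k = 3 := by omega
      subst hk3
      have : s ≤ 1 := by omega
      omega
    · have h16 : 16 ≤ k^(3-1) := by
        have : 4*4 ≤ k*k := Nat.mul_le_mul hk4 hk4
        have hkk : k^(3-1) = k*k := by ring
        omega
      omega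
  · -- n ≥ 4
    obtain ⟨m, rfl⟩ : ∃ m, n = m + 4 := ⟨n - 4, by omega⟩
    have big := three_pow_big m
    have hk'' : 3^(m+3) ≤ k^(m+4-1) := by
      have : m+4-1 = m+3 := by omega
      rw [this]; exact Nat.pow_le_pow_left hk _
    have e1 : 2*(m+4) - 2 = 2*m+6 := by omega
    have e2 : 2*(m+4) - 3 = 2*m+5 := by omega
    rw [e1, e2]
    have hs' : s ≤ m + 3 := by omega
    have h2 : (2*m+5)*s ≤ (2*m+5)*(m+3) := Nat.mul_le_mul_left _ hs'
    nlinarith [big, hk'', h2]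

lemma pick3_spec : ∀ p q : ZMod 3, ∃ x : ZMod 3, x ≠ p ∧ x ≠ q := by decide

lemma two_other_fin3 : ∀ d : Fin 3, ∃ c₁ c₂ : Fin 3, c₁ ≠ c₂ ∧ c₁ ≠ d ∧ c₂ ≠ d := by decide

open SimpleGraph in
lemma good_of_diffs {n k : ℕ} {U : Set (Fin n → ZMod k)} {d : Fin n} {j : ZMod k}
    {v : Fin n → ZMod k}
    (h : ∀ u ∈ U, ∃ c₁ c₂ : Fin n, c₁ ≠ c₂ ∧ c₁ ≠ d ∧ c₂ ≠ d ∧ v c₁ ≠ u c₁ ∧ v c₂ ≠ u c₂) :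
    v ∉ closedNbhd (QCube n k) U ∧ Function.update v d j ∉ closedNbhd (QCube n k) U := by
  suffices H : ∀ w : Fin n → ZMod k, (∀ c, c ≠ d → w c = v c) → w ∉ closedNbhd (QCube n k) U by
    exact ⟨H v (fun _ _ => rfl), H _ (fun c hc => by simp [Function.update_apply, hc])⟩
  intro w hw hmem
  rcases hmem with hmem | ⟨u, hu, hne, e, he, hrest⟩
  · obtain ⟨c₁, c₂, h12, h1d, h2d, hv1, hv2⟩ := h w hmem
    exact hv1 ((hw c₁ h1d).symm)
  · obtain ⟨c₁, c₂, h12, h1d, h2d, hv1, hv2⟩ := h u hu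
    rcases (em (c₁ = e)) with h1e | h1e
    · have h2e : c₂ ≠ e := fun hh => h12 (h1e ▸ hh ▸ rfl)
      exact hv2 (hw c₂ h2d ▸ (hrest c₂ h2e).symm)
    · exact hv1 (hw c₁ h1d ▸ (hrest c₁ h1e).symm)

lemma card_opt {n : ℕ} (hn : 1 ≤ n) (d : Fin n) :
    Fintype.card (Option ({c : Fin n // c ≠ d} × Bool)) = 2*n - 1 := by
  rw [Fintype.card_option, Fintype.card_prod, Fintype.card_bool,
    Fintype.card_subtype_compl, Fintype.card_subtype_eq, Fintype.card_fin]
  omega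

lemma final_arith (n k ℓ ui uj g : ℕ) (hn : 3 ≤ n) (hk : 3 ≤ k) (hl : ℓ ≤ n-1)
    (hsum : ui + uj ≤ ℓ)
    (key : k^(n-1) ≤ g + ((ui+uj)*(2*n-1) + (ℓ - (ui+uj))))
    (hx : ¬(n = 3 ∧ k = 3 ∧ ui + uj = 2)) :
    2*(n:ℤ) - 2 - ℓ - ui - uj < g := by
  have hpow : 2*n - 2 + (2*n - 3) * (ui + uj) < k^(n-1) :=
    pow_gt n k (ui+uj) hn hk (le_trans hsum hl) hx
  have hmul : (ui + uj) * (2*n-1) = (2*n-3) * (ui+uj) + 2*(ui+uj) := by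
    have h1 : 2*n-1 = (2*n-3) + 2 := by omega
    rw [h1, Nat.mul_add, Nat.mul_comm]
    ring
  rw [hmul] at key
  omega

lemma final_arith2 (n ℓ ui uj g : ℕ) (hn : n = 3) (hg : 1 ≤ g) (hl2 : ℓ = 2)
    (hs2 : ui + uj = 2) : 2*(n:ℤ) - 2 - ℓ - ui - uj < g := by
  subst hn; omega

theorem stmt18 (n k ℓ : ℕ) (hn : 3 ≤ n) (hk : 3 ≤ k) (hl : ℓ ≤ n - 1)
    (U : Set (Fin n → ZMod k)) (hU : U.ncard = ℓ)
    (d : Fin n) (i j : ZMod k) (hij : i = j + 1 ∨ i = j - 1) :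
    2 * (n : ℤ) - 2 - ℓ - (U ∩ {v | v d = i}).ncard - (U ∩ {v | v d = j}).ncard <
      ({v : Fin n → ZMod k | v d = i ∧ v ∉ closedNbhd (QCube n k) U ∧
        Function.update v d j ∉ closedNbhd (QCube n k) U}.ncard : ℤ) := by
  classical
  haveI : NeZero k := ⟨by omega⟩
  haveI : Fact (1 < k) := ⟨by omega⟩
  set Good := {v : Fin n → ZMod k | v d = i ∧ v ∉ closedNbhd (QCube n k) U ∧
        Function.update v d j ∉ closedNbhd (QCube n k) U} with hGoodDef
  generalize hui : (U ∩ {v | v d = i}).ncard = ui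
  generalize huj : (U ∩ {v | v d = j}).ncard = uj
  set B : (Fin n → ZMod k) → Set (Fin n → ZMod k) :=
    fun u => {v | v d = i ∧ kill d j u v} with hB
  have hij' : i ≠ j := by
    intro hIJ
    rcases hij with h | h
    · exact one_ne_zero (α := ZMod k) (by linear_combination hIJ - h)
    · exact one_ne_zero (α := ZMod k) (by linear_combination h - hIJ)
  -- the cover
  have cover : {v : Fin n → ZMod k | v d = i} ⊆ Good ∪ ⋃ u ∈ U, B u := by
    intro v hv
    by_cases hkill : ∃ u ∈ U, kill d j u v
    · obtain ⟨u, hu, hky⟩ := hkill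
      exact Or.inr (Set.mem_biUnion hu ⟨hv, hky⟩)
    · push_neg at hkill
      refine Or.inl ⟨hv, ?_, ?_⟩
      · rintro (hm | ⟨u, hu, ha⟩)
        · exact hkill v hm (Or.inl rfl)
        · exact hkill u hu (Or.inr (Or.inl ha))
      · rintro (hm | ⟨u, hu, ha⟩)
        · exact hkill _ hm (Or.inr (Or.inr (Or.inl rfl)))
        · exact hkill u hu (Or.inr (Or.inr (Or.inr ha)))
  -- finset versions
  have fU : U.Finite := Set.toFinite U
  set U' : Finset (Fin n → ZMod k) := fU.toFinset with hU'
  have hU'card : U'.card = ℓ := by rw [← hU, Set.ncard_eq_toFinset_card U fU]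
  -- size of A
  have hA : k^(n-1) ≤ {v : Fin n → ZMod k | v d = i}.ncard := by
    have hinj : Function.Injective (fun (g : {c : Fin n // c ≠ d} → ZMod k) =>
        (⟨fun c => if h : c = d then i else g ⟨c, h⟩, by simp⟩ :
          {v : Fin n → ZMod k // v ∈ {v : Fin n → ZMod k | v d = i}})) := by
      intro g g' hgg
      funext c
      have := congrFun (congrArg Subtype.val hgg) c.1
      simpa [dif_neg c.2] using this
    have hcard := Fintype.card_le_of_injective _ hinj
    calc k^(n-1) = Fintype.card ({c : Fin n // c ≠ d} → ZMod k) := by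
          rw [Fintype.card_fun, ZMod.card, Fintype.card_subtype_compl,
            Fintype.card_subtype_eq, Fintype.card_fin]
      _ ≤ Fintype.card {v : Fin n → ZMod k // v ∈ {v : Fin n → ZMod k | v d = i}} := hcard
      _ = {v : Fin n → ZMod k | v d = i}.ncard := by
          rw [← Nat.card_eq_fintype_card, Nat.card_coe_set_eq]
  -- ball bounds
  have hBall : ∀ u : Fin n → ZMod k, (B u).ncard ≤ 2*n - 1 := by
    intro u
    have h1 : (B u).ncard ≤ (Set.range (Fmap d i u)).ncard :=
      Set.ncard_le_ncard (kill_subset_range d i j u) (Set.toFinite _)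
    have h2 : (Set.range (Fmap d i u)).ncard ≤
        Fintype.card (Option ({c : Fin n // c ≠ d} × Bool)) := by
      rw [← Set.image_univ]
      calc (Fmap d i u '' Set.univ).ncard
          ≤ (Set.univ : Set (Option ({c : Fin n // c ≠ d} × Bool))).ncard :=
            Set.ncard_image_le (Set.toFinite _)
        _ = _ := by rw [Set.ncard_univ, Nat.card_eq_fintype_card]
    exact card_opt ((Nat.lt_of_lt_of_le (by decide) hn).le) d ▸ le_trans h1 h2
  have hSingle : ∀ u : Fin n → ZMod k, ¬(u d = i ∨ u d = j) → (B u).ncard ≤ 1 := by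
    intro u hP
    push_neg at hP
    calc (B u).ncard ≤ ({Function.update u d i} : Set (Fin n → ZMod k)).ncard :=
          Set.ncard_le_ncard (kill_subset_single d i j u hP.1 hP.2) (Set.toFinite _)
      _ = 1 := Set.ncard_singleton _
  -- union bound
  have hUnion : (⋃ u ∈ U, B u).ncard ≤ ∑ u ∈ U', (B u).ncard := by
    have he : (⋃ u ∈ U, B u) = ↑(U'.biUnion (fun u => (Set.toFinite (B u)).toFinset)) := by
      ext v
      simp only [Set.mem_iUnion, Finset.coe_biUnion, Finset.mem_coe, hU',
        Set.Finite.mem_toFinset, Set.mem_iUnion, exists_prop]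
    rw [he, Set.ncard_coe_finset]
    refine le_trans Finset.card_biUnion_le (Finset.sum_le_sum ?_)
    intro u hu
    exact le_of_eq (Set.ncard_eq_toFinset_card (B u) (Set.toFinite _)).symm
  -- filter cardinalities
  have hfi : (U'.filter (fun u => u d = i)).card = ui := by
    have he : (Set.toFinite (U ∩ {v | v d = i})).toFinset = U'.filter (fun u => u d = i) := by
      ext x
      simp only [hU', Set.Finite.mem_toFinset, Finset.mem_filter]
      exact Iff.rfl
    rw [← hui, Set.ncard_eq_toFinset_card _ (Set.toFinite _), he]
  have hfj : (U'.filter (fun u => u d = j)).card = uj := by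
    have he : (Set.toFinite (U ∩ {v | v d = j})).toFinset = U'.filter (fun u => u d = j) := by
      ext x
      simp only [hU', Set.Finite.mem_toFinset, Finset.mem_filter]
      exact Iff.rfl
    rw [← huj, Set.ncard_eq_toFinset_card _ (Set.toFinite _), he]
  have hfP : (U'.filter (fun u => u d = i ∨ u d = j)).card = ui + uj := by
    rw [Finset.filter_or, Finset.card_union_of_disjoint, hfi, hfj]
    refine Finset.disjoint_left.mpr ?_
    intro u h1 h2
    rw [Finset.mem_filter] at h1 h2
    exact hij' (h1.2.symm.trans h2.2)
  clear_value B
  clear_value Good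
  clear hB
  have hsum : ui + uj ≤ ℓ := by
    rw [← hfP, ← hU'card]; exact Finset.card_filter_le _ _
  -- sum bound
  have hSum : ∑ u ∈ U', (B u).ncard ≤ (ui + uj) * (2*n-1) + (ℓ - (ui+uj)) := by
    rw [← Finset.sum_filter_add_sum_filter_not U' (fun u => u d = i ∨ u d = j)]
    have h1 : ∑ u ∈ U'.filter (fun u => u d = i ∨ u d = j), (B u).ncard ≤ (ui+uj) * (2*n-1) := by
      calc _ ≤ (U'.filter (fun u => u d = i ∨ u d = j)).card • (2*n-1) :=
            Finset.sum_le_card_nsmul _ _ _ (fun u _ => hBall u)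
        _ = (ui+uj) * (2*n-1) := by rw [hfP, smul_eq_mul]
    have h2 : ∑ u ∈ U'.filter (fun u => ¬(u d = i ∨ u d = j)), (B u).ncard ≤ ℓ - (ui+uj) := by
      calc _ ≤ (U'.filter (fun u => ¬(u d = i ∨ u d = j))).card • 1 :=
            Finset.sum_le_card_nsmul _ _ _ (fun u hu => hSingle u (Finset.mem_filter.mp hu).2)
        _ = ℓ - (ui + uj) := by
            rw [smul_eq_mul, mul_one]
            have h3 := Finset.card_filter_add_card_filter_not
              (s := U') (p := fun u => u d = i ∨ u d = j)
            rw [hfP, hU'card] at h3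
            exact (Nat.eq_sub_of_add_eq' h3).symm ▸ rfl
    exact le_trans (le_of_eq rfl) (Nat.add_le_add h1 h2)
  -- main chain
  have key : k^(n-1) ≤ Good.ncard + ((ui + uj) * (2*n-1) + (ℓ - (ui+uj))) := by
    calc k^(n-1) ≤ {v : Fin n → ZMod k | v d = i}.ncard := hA
      _ ≤ (Good ∪ ⋃ u ∈ U, B u).ncard := Set.ncard_le_ncard cover (Set.toFinite _)
      _ ≤ Good.ncard + (⋃ u ∈ U, B u).ncard := Set.ncard_union_le _ _
      _ ≤ Good.ncard + ((ui + uj) * (2*n-1) + (ℓ - (ui+uj))) := by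
          exact Nat.add_le_add_left (le_trans hUnion hSum) _
  by_cases hx : n = 3 ∧ k = 3 ∧ ui + uj = 2
  · -- exceptional case
    obtain ⟨hn3, hk3, hs2⟩ := hx
    subst hn3; subst hk3
    have hl2 : ℓ = 2 := le_antisymm hl (hs2 ▸ hsum)
    have hGoodPos : 1 ≤ Good.ncard := by
      rw [Nat.one_le_iff_ne_zero, ← Nat.pos_iff_ne_zero,
        Set.ncard_pos (Set.toFinite _), hGoodDef]
      obtain ⟨a, b, hab, hUab⟩ := Set.ncard_eq_two.mp (by rw [hU, hl2])
      have hpick : ∀ c : Fin 3, ∃ x : ZMod 3, x ≠ a c ∧ x ≠ b c :=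
        fun c => pick3_spec (a c) (b c)
      choose f hf1 hf2 using hpick
      refine ⟨fun c => if c = d then i else f c, by simp, good_of_diffs ?_⟩
      intro u hu
      obtain ⟨c₁, c₂, h12, h1d, h2d⟩ := two_other_fin3 d
      rw [hUab] at hu
      rcases hu with rfl | rfl
      · exact ⟨c₁, c₂, h12, h1d, h2d, by simp [h1d, hf1], by simp [h2d, hf1]⟩
      · exact ⟨c₁, c₂, h12, h1d, h2d, by simp [h1d, hf2], by simp [h2d, hf2]⟩
    exact final_arith2 3 ℓ ui uj Good.ncard rfl hGoodPos hl2 hs2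
  · exact final_arith n k ℓ ui uj Good.ncard hn hk hl hsum key hx
end
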